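/- arXiv:1512.08106 — 7 statements merged into one kernel-verified Lean document; each statement's English description precedes it below -/
import Mathlib

section
/- For every sequence of integers a : ℕ → ℤ, both AEinf(a) and AEsup(a) lie in the interval [TPinf(a), TPsup(a)] of the extended reals; that is, TPinf(a) ≤ AEinf(a) ≤ AEsup(a) ≤ TPsup(a). -/
open Filter

noncomputable section

lemma cesaro_limsup_le (b : ℕ → ℝ) :
    limsup (fun n : ℕ => (((∑ i ∈ Finset.range n, b i) / n : ℝ) : EReal)) atTop ≤
      limsup (fun n : ℕ => ((b n : ℝ) : EReal)) atTop := by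
  rw [← EReal.le_of_forall_lt_iff_le]
  intro r hr
  have h := eventually_lt_of_limsup_lt hr
  rw [eventually_atTop] at h
  obtain ⟨N, hN⟩ := h
  have hN' : ∀ n ≥ N, b n < r := fun n hn => by exact_mod_cast hN n hn
  set K : ℝ := (∑ i ∈ Finset.range N, b i) - N * r with hK
  have key : ∀ n : ℕ, n ≥ max N 1 → ((∑ i ∈ Finset.range n, b i) / n : ℝ) ≤ K / n + r := by
    intro n hn
    have hnN : N ≤ n := le_trans (le_max_left _ _) hn
    have hn1 : (1 : ℕ) ≤ n := le_trans (le_max_right _ _) hn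
    have hnpos : (0 : ℝ) < n := by exact_mod_cast hn1
    have hsum : (∑ i ∈ Finset.range n, b i) ≤ K + n * r := by
      rw [← Finset.sum_range_add_sum_Ico b hnN]
      have h2 : (∑ i ∈ Finset.Ico N n, b i) ≤ (n - N : ℝ) * r := by
        calc (∑ i ∈ Finset.Ico N n, b i) ≤ ∑ i ∈ Finset.Ico N n, r :=
              Finset.sum_le_sum fun i hi => (hN' i (Finset.mem_Ico.mp hi).1).le
          _ = (n - N : ℕ) * r := by rw [Finset.sum_const, Nat.card_Ico, nsmul_eq_mul]
          _ = (n - N : ℝ) * r := by rw [Nat.cast_sub hnN]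
      rw [hK]; nlinarith
    calc ((∑ i ∈ Finset.range n, b i) / n : ℝ) ≤ (K + n * r) / n := by gcongr
      _ = K / n + r := by field_simp
  have hle : limsup (fun n : ℕ => (((∑ i ∈ Finset.range n, b i) / n : ℝ) : EReal)) atTop ≤
      limsup (fun n : ℕ => ((K / n + r : ℝ) : EReal)) atTop := by
    refine limsup_le_limsup ?_ (by isBoundedDefault) (by isBoundedDefault)
    filter_upwards [eventually_ge_atTop (max N 1)] with n hn
    exact_mod_cast key n hn
  refine hle.trans ?_
  have htend : Tendsto (fun n : ℕ => ((K / n + r : ℝ) : EReal)) atTop (nhds (r : EReal)) := by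
    have : Tendsto (fun n : ℕ => (K / n + r : ℝ)) atTop (nhds r) := by
      have := (tendsto_const_div_atTop_nhds_zero_nat K).add_const r
      simpa using this
    exact (continuous_coe_real_ereal.tendsto _).comp this
  rw [htend.limsup_eq]

lemma cesaro_le_liminf (b : ℕ → ℝ) :
    liminf (fun n : ℕ => ((b n : ℝ) : EReal)) atTop ≤
      liminf (fun n : ℕ => (((∑ i ∈ Finset.range n, b i) / n : ℝ) : EReal)) atTop := by
  have h := cesaro_limsup_le (fun n => -b n)
  have e1 : (fun n : ℕ => (((∑ i ∈ Finset.range n, (-b i)) / n : ℝ) : EReal)) =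
      -(fun n : ℕ => (((∑ i ∈ Finset.range n, b i) / n : ℝ) : EReal)) := by
    funext n
    simp [Finset.sum_neg_distrib, neg_div, ← EReal.coe_neg]
  have e2 : (fun n : ℕ => ((-b n : ℝ) : EReal)) =
      -(fun n : ℕ => ((b n : ℝ) : EReal)) := by
    funext n; simp [← EReal.coe_neg]
  rw [e1, e2, EReal.limsup_neg, EReal.limsup_neg] at h
  exact EReal.neg_le_neg_iff.mp h


/-- Energy level of the integer sequence `a` at position `n`: the sum of the first `n` weights. -/
def EL (a : ℕ → ℤ) (n : ℕ) : ℤ := ∑ i ∈ Finset.range n, a i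

/-- Average-energy (limsup variant) of a sequence of integers, in the extended reals. -/
def AEsup (a : ℕ → ℤ) : EReal :=
  limsup (fun n : ℕ => (((∑ i ∈ Finset.range n, (EL a (i + 1) : ℝ)) / n : ℝ) : EReal)) atTop

/-- Average-energy (liminf variant). -/
def AEinf (a : ℕ → ℤ) : EReal :=
  liminf (fun n : ℕ => (((∑ i ∈ Finset.range n, (EL a (i + 1) : ℝ)) / n : ℝ) : EReal)) atTop

/-- Total-payoff (limsup variant). -/
def TPsup (a : ℕ → ℤ) : EReal :=
  limsup (fun n : ℕ => ((EL a n : ℝ) : EReal)) atTop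

/-- Total-payoff (liminf variant). -/
def TPinf (a : ℕ → ℤ) : EReal :=
  liminf (fun n : ℕ => ((EL a n : ℝ) : EReal)) atTop

/-- Mean-payoff (limsup variant). -/
def MPsup (a : ℕ → ℤ) : EReal :=
  limsup (fun n : ℕ => (((EL a n : ℝ) / n : ℝ) : EReal)) atTop

/-- Mean-payoff (liminf variant). -/
def MPinf (a : ℕ → ℤ) : EReal :=
  liminf (fun n : ℕ => (((EL a n : ℝ) / n : ℝ) : EReal)) atTop

/-- Both average-energy values lie between the liminf and limsup total-payoff values. -/
theorem AE_between_TP (a : ℕ → ℤ) :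
    TPinf a ≤ AEinf a ∧ AEinf a ≤ AEsup a ∧ AEsup a ≤ TPsup a := by
  refine ⟨?_, by exact liminf_le_limsup, ?_⟩
  · have h := cesaro_le_liminf (fun i => (EL a (i + 1) : ℝ))
    refine le_trans ?_ h
    rw [TPinf, ← liminf_nat_add (fun n : ℕ => ((EL a n : ℝ) : EReal)) 1]
  · have h := cesaro_limsup_le (fun i => (EL a (i + 1) : ℝ))
    refine le_trans h ?_
    rw [TPsup, ← limsup_nat_add (fun n : ℕ => ((EL a n : ℝ) : EReal)) 1]

end
end

section
/- Let L = [b₀, …, b_{k−1}] be a finite list of integers and a : ℕ → ℤ a sequence, and let L·a denote the concatenated sequence b₀, …, b_{k−1}, a(0), a(1), …. Then AEsup(L·a) = (Σ_{i<k} b_i) + AEsup(a) and AEinf(L·a) = (Σ_{i<k} b_i) + AEinf(a), where the sum with ±∞ in the extended reals is interpreted in the usual way. -/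
open Filter

noncomputable section

/-- The sequence obtained by prepending the finite list `L` to the sequence `a`. -/
def prependSeq (L : List ℤ) (a : ℕ → ℤ) : ℕ → ℤ := fun n =>
  if h : n < L.length then L.get ⟨n, h⟩ else a (n - L.length)

private lemma key_limsup_le (x y : ℕ → ℝ)
    (h : ∀ ε : ℝ, 0 < ε → ∀ᶠ n in atTop, ∃ c : ℝ, 0 ≤ c ∧ |c - 1| ≤ ε ∧ x n ≤ c * y n + ε) :
    limsup (fun n => ((x n : ℝ) : EReal)) atTop ≤ limsup (fun n => ((y n : ℝ) : EReal)) atTop := by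
  by_contra hlt
  push_neg at hlt
  obtain ⟨b, hb1, hb2⟩ := EReal.exists_between_coe_real hlt
  obtain ⟨b', hb'1, hb'2⟩ := EReal.exists_between_coe_real hb2
  rw [EReal.coe_lt_coe_iff] at hb'1
  set ε : ℝ := min 1 ((b' - b) / (|b| + 1)) with hε
  have hεpos : 0 < ε := lt_min one_pos (div_pos (by linarith) (by positivity))
  have hev1 : ∀ᶠ n in atTop, (fun n => ((y n : ℝ) : EReal)) n < (b : EReal) :=
    eventually_lt_of_limsup_lt hb1
  have hxb : ∀ᶠ n in atTop, (fun n => ((x n : ℝ) : EReal)) n ≤ (b' : EReal) := by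
    filter_upwards [hev1, h ε hεpos] with n hn hc
    obtain ⟨c, hc0, hc1, hc2⟩ := hc
    simp only [EReal.coe_lt_coe_iff] at hn
    simp only [EReal.coe_le_coe_iff]
    have h1 : c * y n ≤ c * b := mul_le_mul_of_nonneg_left hn.le hc0
    have h2 : c * b ≤ b + ε * |b| := by
      have e1 : c * b - b = (c - 1) * b := by ring
      have e2 : (c - 1) * b ≤ |c - 1| * |b| := le_trans (le_abs_self _) (by rw [abs_mul])
      have e3 : |c - 1| * |b| ≤ ε * |b| := mul_le_mul_of_nonneg_right hc1 (abs_nonneg b)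
      linarith
    have h3 : ε * (|b| + 1) ≤ b' - b := by
      have hm := min_le_right 1 ((b' - b) / (|b| + 1))
      calc ε * (|b| + 1) ≤ ((b' - b) / (|b| + 1)) * (|b| + 1) :=
            mul_le_mul_of_nonneg_right hm (by positivity)
        _ = b' - b := by field_simp
    nlinarith [hεpos.le]
  have hfin : limsup (fun n => ((x n : ℝ) : EReal)) atTop ≤ ((b' : ℝ) : EReal) :=
    limsup_le_of_le (h := hxb)
  exact absurd (lt_of_le_of_lt hfin hb'2) (lt_irrefl _)

private lemma AE_key (x y e e' c c' : ℕ → ℝ)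
    (he : Tendsto e atTop (nhds 0)) (he' : Tendsto e' atTop (nhds 0))
    (hc : Tendsto c atTop (nhds 1)) (hc' : Tendsto c' atTop (nhds 1))
    (hc0 : ∀ n, 0 ≤ c n) (hc'0 : ∀ n, 0 ≤ c' n)
    (hxy : ∀ᶠ n in atTop, x n = e n + c n * y n)
    (hyx : ∀ᶠ n in atTop, y n = e' n + c' n * x n) :
    (limsup (fun n => ((x n : ℝ) : EReal)) atTop = limsup (fun n => ((y n : ℝ) : EReal)) atTop) ∧
    (liminf (fun n => ((x n : ℝ) : EReal)) atTop = liminf (fun n => ((y n : ℝ) : EReal)) atTop) := by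
  have heps : ∀ (u : ℕ → ℝ) (l : ℝ), Tendsto u atTop (nhds l) →
      ∀ ε : ℝ, 0 < ε → ∀ᶠ n in atTop, |u n - l| ≤ ε := by
    intro u l hu ε hε
    have := hu.eventually (Metric.closedBall_mem_nhds l hε)
    filter_upwards [this] with n hn
    simpa [Real.dist_eq] using hn
  have H1 : ∀ ε : ℝ, 0 < ε → ∀ᶠ n in atTop, ∃ d : ℝ, 0 ≤ d ∧ |d - 1| ≤ ε ∧ x n ≤ d * y n + ε := by
    intro ε hε
    filter_upwards [hxy, heps e 0 he ε hε, heps c 1 hc ε hε] with n h1 h2 h3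
    exact ⟨c n, hc0 n, h3, by rw [h1]; have := le_abs_self (e n); simp at h2; linarith⟩
  have H2 : ∀ ε : ℝ, 0 < ε → ∀ᶠ n in atTop, ∃ d : ℝ, 0 ≤ d ∧ |d - 1| ≤ ε ∧ y n ≤ d * x n + ε := by
    intro ε hε
    filter_upwards [hyx, heps e' 0 he' ε hε, heps c' 1 hc' ε hε] with n h1 h2 h3
    exact ⟨c' n, hc'0 n, h3, by rw [h1]; have := le_abs_self (e' n); simp at h2; linarith⟩
  have H3 : ∀ ε : ℝ, 0 < ε → ∀ᶠ n in atTop, ∃ d : ℝ, 0 ≤ d ∧ |d - 1| ≤ ε ∧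
      (fun n => -x n) n ≤ d * (fun n => -y n) n + ε := by
    intro ε hε
    filter_upwards [hxy, heps e 0 he ε hε, heps c 1 hc ε hε] with n h1 h2 h3
    refine ⟨c n, hc0 n, h3, ?_⟩
    have := neg_abs_le (e n); simp at h2
    show -_ ≤ _ * -_ + _; nlinarith [h1]
  have H4 : ∀ ε : ℝ, 0 < ε → ∀ᶠ n in atTop, ∃ d : ℝ, 0 ≤ d ∧ |d - 1| ≤ ε ∧
      (fun n => -y n) n ≤ d * (fun n => -x n) n + ε := by
    intro ε hε
    filter_upwards [hyx, heps e' 0 he' ε hε, heps c' 1 hc' ε hε] with n h1 h2 h3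
    refine ⟨c' n, hc'0 n, h3, ?_⟩
    have := neg_abs_le (e' n); simp at h2
    show -_ ≤ _ * -_ + _; nlinarith [h1]
  constructor
  · exact le_antisymm (key_limsup_le x y H1) (key_limsup_le y x H2)
  · have hnx : (fun n => (((-x n : ℝ)) : EReal)) = -(fun n => ((x n : ℝ) : EReal)) := by
      funext n; exact EReal.coe_neg (x n)
    have hny : (fun n => (((-y n : ℝ)) : EReal)) = -(fun n => ((y n : ℝ) : EReal)) := by
      funext n; exact EReal.coe_neg (y n)
    have l1 := key_limsup_le (fun n => -x n) (fun n => -y n) H3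
    have l2 := key_limsup_le (fun n => -y n) (fun n => -x n) H4
    rw [hnx, hny] at l1 l2
    rw [EReal.limsup_neg, EReal.limsup_neg] at l1 l2
    exact neg_injective (le_antisymm l1 l2)

private lemma real_id1 (Cc Ss Gg nr kr : ℝ) (hn : nr ≠ 0) (hnk : nr + kr ≠ 0) :
    (Cc + (nr * Ss + Gg)) / (nr + kr) = Cc / (nr + kr) + nr / (nr + kr) * (Ss + Gg / nr) := by
  field_simp

private lemma real_id2 (Cc Ss Gg nr kr : ℝ) (hn : nr ≠ 0) (hnk : nr + kr ≠ 0) :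
    Ss + Gg / nr = -Cc / nr + (nr + kr) / nr * ((Cc + (nr * Ss + Gg)) / (nr + kr)) := by
  field_simp
  ring

private lemma limsup_const_add' (S : ℝ) (v : ℕ → EReal) :
    limsup (fun n => (S : EReal) + v n) atTop = (S : EReal) + limsup v atTop := by
  apply le_antisymm
  · have h := EReal.limsup_add_le (f := atTop) (u := v) (v := fun _ => (S : EReal))
      (Or.inr (by simp [limsup_const]))
      (Or.inr (by simp [limsup_const]))
    simp only [limsup_const] at h
    calc limsup (fun n => (S : EReal) + v n) atTop
        = limsup (v + fun _ => (S : EReal)) atTop := by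
          congr 1; funext n; exact add_comm _ _
      _ ≤ limsup v atTop + S := h
      _ = (S : EReal) + limsup v atTop := add_comm _ _
  · have h := EReal.le_limsup_add (f := atTop) (u := v) (v := fun _ => (S : EReal))
    simp only [liminf_const] at h
    calc (S : EReal) + limsup v atTop = limsup v atTop + S := add_comm _ _
      _ ≤ limsup (v + fun _ => (S : EReal)) atTop := h
      _ = limsup (fun n => (S : EReal) + v n) atTop := by
          congr 1; funext n; exact add_comm _ _

private lemma liminf_const_add' (S : ℝ) (v : ℕ → EReal) :
    liminf (fun n => (S : EReal) + v n) atTop = (S : EReal) + liminf v atTop := by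
  apply le_antisymm
  · have h := EReal.liminf_add_le (f := atTop) (u := fun _ => (S : EReal)) (v := v)
      (Or.inl (by simp [limsup_const]))
      (Or.inl (by simp [limsup_const]))
    simp only [limsup_const] at h
    have hfun : (fun n => (S : EReal) + v n) = (fun _ => (S : EReal)) + v := by
      funext n; rfl
    rw [hfun]
    exact h
  · have h := EReal.le_liminf_add (f := atTop) (u := fun _ => (S : EReal)) (v := v)
    simp only [liminf_const] at h
    have hfun : (fun n => (S : EReal) + v n) = (fun _ => (S : EReal)) + v := by
      funext n; rfl
    rw [hfun]
    exact h

/-- Average-energy prefix lemma: prepending a finite prefix shifts the average-energy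
by the energy level (sum) of that prefix. -/
theorem AE_prepend (L : List ℤ) (a : ℕ → ℤ) :
    AEsup (prependSeq L a) = ((L.sum : ℝ) : EReal) + AEsup a ∧
    AEinf (prependSeq L a) = ((L.sum : ℝ) : EReal) + AEinf a := by
  classical
  set b : ℕ → ℤ := prependSeq L a with hb
  set k : ℕ := L.length with hk
  set S : ℝ := (L.sum : ℝ) with hS
  set F : ℕ → ℝ := fun n => ∑ i ∈ Finset.range n, (EL b (i + 1) : ℝ) with hF
  set G : ℕ → ℝ := fun n => ∑ i ∈ Finset.range n, (EL a (i + 1) : ℝ) with hG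
  -- prefix sum of the prepended list
  have sumL : ∑ i ∈ Finset.range k, b i = L.sum := by
    rw [← Fin.sum_univ_eq_sum_range (fun i => b i) k]
    have hbi : ∀ i : Fin k, b i = L.get i := by
      intro i
      show prependSeq L a i = _
      unfold prependSeq
      rw [dif_pos i.isLt]
    rw [Finset.sum_congr rfl (fun i _ => hbi i), ← List.sum_ofFn (f := L.get), List.ofFn_get]
  have stepA : ∀ m : ℕ, EL b (k + m) = L.sum + EL a m := by
    intro m
    simp only [EL]
    rw [Finset.sum_range_add, sumL]
    congr 1
    apply Finset.sum_congr rfl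
    intro i _
    show prependSeq L a (k + i) = a i
    unfold prependSeq
    rw [dif_neg (by omega)]
    congr 1
    omega
  have stepB : ∀ n : ℕ, F (k + n) = F k + ((n : ℝ) * S + G n) := by
    intro n
    show (∑ i ∈ Finset.range (k + n), (EL b (i + 1) : ℝ)) = _
    rw [Finset.sum_range_add]
    congr 1
    have : ∀ i ∈ Finset.range n, (EL b (k + i + 1) : ℝ) = S + (EL a (i + 1) : ℝ) := by
      intro i _
      have : k + i + 1 = k + (i + 1) := by omega
      rw [this, stepA, Int.cast_add]
    rw [Finset.sum_congr rfl this, Finset.sum_add_distrib, Finset.sum_const,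
      Finset.card_range, nsmul_eq_mul]
  -- the sequences for the key lemma
  set x : ℕ → ℝ := fun n => F (n + k) / ((n + k : ℕ) : ℝ) with hx
  set y : ℕ → ℝ := fun n => S + G n / (n : ℝ) with hy
  set e : ℕ → ℝ := fun n => F k / ((n + k : ℕ) : ℝ) with he_def
  set c : ℕ → ℝ := fun n => (n : ℝ) / ((n : ℝ) + (k : ℝ)) with hc_def
  set e' : ℕ → ℝ := fun n => (-(F k)) / (n : ℝ) with he'_def
  set c' : ℕ → ℝ := fun n => ((n : ℝ) + (k : ℝ)) / (n : ℝ) with hc'_def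
  have he : Tendsto e atTop (nhds 0) :=
    (tendsto_const_div_atTop_nhds_zero_nat (F k)).comp (tendsto_add_atTop_nat k)
  have he' : Tendsto e' atTop (nhds 0) := tendsto_const_div_atTop_nhds_zero_nat _
  have hc : Tendsto c atTop (nhds 1) := tendsto_natCast_div_add_atTop (k : ℝ)
  have hc' : Tendsto c' atTop (nhds 1) := by
    have h1 : Tendsto (fun n : ℕ => 1 + (k : ℝ) / (n : ℝ)) atTop (nhds 1) := by
      have := tendsto_const_nhds (x := (1 : ℝ)) (f := atTop (α := ℕ))
      simpa using this.add (tendsto_const_div_atTop_nhds_zero_nat (k : ℝ))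
    apply Tendsto.congr' _ h1
    filter_upwards [eventually_gt_atTop 0] with n hn
    have hn' : (n : ℝ) ≠ 0 := Nat.cast_ne_zero.mpr hn.ne'
    simp only [hc'_def]
    field_simp
  have hc0 : ∀ n, 0 ≤ c n := fun n => div_nonneg (Nat.cast_nonneg n) (by positivity)
  have hc'0 : ∀ n, 0 ≤ c' n := fun n => div_nonneg (by positivity) (Nat.cast_nonneg n)
  have hxy : ∀ᶠ n in atTop, x n = e n + c n * y n := by
    filter_upwards [eventually_gt_atTop 0] with n hn
    have hn' : (0 : ℝ) < (n : ℝ) := Nat.cast_pos.mpr hn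
    have hnk : (0 : ℝ) < (n : ℝ) + (k : ℝ) := by positivity
    simp only [hx, hy, he_def, hc_def]
    rw [show n + k = k + n by omega, stepB, Nat.cast_add, add_comm (k:ℝ) (n:ℝ)]
    exact real_id1 _ _ _ _ _ hn'.ne' (add_pos_of_pos_of_nonneg hn' (Nat.cast_nonneg k)).ne'
  have hyx : ∀ᶠ n in atTop, y n = e' n + c' n * x n := by
    filter_upwards [eventually_gt_atTop 0] with n hn
    have hn' : (0 : ℝ) < (n : ℝ) := Nat.cast_pos.mpr hn
    have hnk : (0 : ℝ) < (n : ℝ) + (k : ℝ) := by positivity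
    simp only [hx, hy, he'_def, hc'_def]
    rw [show n + k = k + n by omega, stepB, Nat.cast_add, add_comm (k:ℝ) (n:ℝ)]
    exact real_id2 _ _ _ _ _ hn'.ne' (add_pos_of_pos_of_nonneg hn' (Nat.cast_nonneg k)).ne'
  obtain ⟨Hsup, Hinf⟩ := AE_key x y e e' c c' he he' hc hc' hc0 hc'0 hxy hyx
  -- identify limsup x' with AEsup b via shift invariance
  have hshift_sup : AEsup b = limsup (fun n => ((x n : ℝ) : EReal)) atTop := by
    rw [AEsup]
    exact (limsup_nat_add (fun n => (((F n / (n : ℝ)) : ℝ) : EReal)) k).symm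
  have hshift_inf : AEinf b = liminf (fun n => ((x n : ℝ) : EReal)) atTop := by
    rw [AEinf]
    exact (liminf_nat_add (fun n => (((F n / (n : ℝ)) : ℝ) : EReal)) k).symm
  -- identify limsup y' with S + AEsup a
  have hy_sup : limsup (fun n => ((y n : ℝ) : EReal)) atTop = (S : EReal) + AEsup a := by
    have : (fun n => ((y n : ℝ) : EReal))
        = fun n => (S : EReal) + (((G n / (n : ℝ)) : ℝ) : EReal) := by
      funext n; exact EReal.coe_add _ _
    rw [this, limsup_const_add']
    rfl
  have hy_inf : liminf (fun n => ((y n : ℝ) : EReal)) atTop = (S : EReal) + AEinf a := by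
    have : (fun n => ((y n : ℝ) : EReal))
        = fun n => (S : EReal) + (((G n / (n : ℝ)) : ℝ) : EReal) := by
      funext n; exact EReal.coe_add _ _
    rw [this, liminf_const_add']
    rfl
  constructor
  · rw [hshift_sup, Hsup, hy_sup]
  · rw [hshift_inf, Hinf, hy_inf]

end
end

section
/- Let ℓ ≥ 1 and let c₀, …, c_{ℓ−1} be integers with Σ_{i<ℓ} c_i = 0, and let a : ℕ → ℤ be the ℓ-periodic sequence a(n) = c_{n mod ℓ}. Then AEsup(a) = AEinf(a) = (1/ℓ)·Σ_{i=1}^{ℓ} EL(a, i), i.e., the average-energy of the infinite repetition of a zero-sum cycle equals the average of the partial sums over one period. -/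
open Filter

/-- Sum of a periodic function over a full period is shift-invariant. -/
private lemma shift_sum {M : Type*} [AddCommGroup M] (ℓ : ℕ) (φ : ℕ → M)
    (hφ : ∀ n, φ (n + ℓ) = φ n) (n : ℕ) :
    ∑ i ∈ Finset.range ℓ, φ (n + i) = ∑ i ∈ Finset.range ℓ, φ i := by
  induction n with
  | zero => simp
  | succ n ih =>
    have h1 : ∑ i ∈ Finset.range (ℓ + 1), φ (n + i)
        = (∑ i ∈ Finset.range ℓ, φ (n + i)) + φ (n + ℓ) := Finset.sum_range_succ _ _
    have h2 : ∑ i ∈ Finset.range (ℓ + 1), φ (n + i)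
        = (∑ i ∈ Finset.range ℓ, φ (n + 1 + i)) + φ n := by
      rw [Finset.sum_range_succ' (fun i => φ (n + i)) ℓ]
      simp only [Nat.add_zero]
      congr 1
      apply Finset.sum_congr rfl
      intro i _
      congr 1
      omega
    have h3 : (∑ i ∈ Finset.range ℓ, φ (n + 1 + i)) = ∑ i ∈ Finset.range ℓ, φ (n + i) := by
      have := h1.symm.trans h2
      rw [hφ n] at this
      exact (add_right_cancel this).symm
    rw [h3, ih]

noncomputable section

/-- The average-energy of the infinite repetition of a zero-sum cycle `c 0, …, c (ℓ-1)` equals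
the average of the partial sums over one period; moreover the limsup and liminf variants agree. -/
theorem AE_periodic_zero_cycle (ℓ : ℕ) (hℓ : 1 ≤ ℓ) (c : ℕ → ℤ)
    (hsum : ∑ i ∈ Finset.range ℓ, c i = 0)
    (a : ℕ → ℤ) (ha : ∀ n, a n = c (n % ℓ)) :
    AEsup a = (((∑ i ∈ Finset.range ℓ, (EL a (i + 1) : ℝ)) / ℓ : ℝ) : EReal) ∧
    AEinf a = (((∑ i ∈ Finset.range ℓ, (EL a (i + 1) : ℝ)) / ℓ : ℝ) : EReal) := by
  have hℓ0 : (ℓ : ℝ) ≠ 0 := by positivity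
  -- a is ℓ-periodic
  have haper : ∀ n, a (n + ℓ) = a n := by
    intro n; rw [ha, ha, Nat.add_mod_right]
  -- sum of a over one period (starting at 0) is 0
  have hsa : ∑ i ∈ Finset.range ℓ, a i = 0 := by
    rw [← hsum]
    exact Finset.sum_congr rfl fun i hi => by
      rw [ha, Nat.mod_eq_of_lt (Finset.mem_range.mp hi)]
  -- EL a is ℓ-periodic
  have hEL : ∀ n, EL a (n + ℓ) = EL a n := by
    intro n
    unfold EL
    rw [Finset.sum_range_add, shift_sum ℓ a haper, hsa, add_zero]
  set T : ℝ := ∑ i ∈ Finset.range ℓ, (EL a (i + 1) : ℝ) with hT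
  set h : ℕ → ℝ := fun n => (EL a (n + 1) : ℝ) - T / ℓ with hh
  have hhper : ∀ n, h (n + ℓ) = h n := by
    intro n
    simp only [hh]
    have : n + ℓ + 1 = n + 1 + ℓ := by omega
    rw [this, hEL]
  have hhsum : ∑ i ∈ Finset.range ℓ, h i = 0 := by
    simp only [hh]
    rw [Finset.sum_sub_distrib, Finset.sum_const, Finset.card_range, ← hT]
    rw [nsmul_eq_mul]
    field_simp
    ring
  set H : ℕ → ℝ := fun n => ∑ i ∈ Finset.range n, h i with hH
  have hHper : ∀ n, H (n + ℓ) = H n := by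
    intro n
    simp only [hH]
    rw [Finset.sum_range_add, shift_sum ℓ h hhper, hhsum, add_zero]
  -- H n = H (n % ℓ)
  have hHmod : ∀ n, H n = H (n % ℓ) := by
    intro n
    have : ∀ q r, H (q * ℓ + r) = H r := by
      intro q
      induction q with
      | zero => intro r; simp
      | succ q ih =>
        intro r
        have : (q + 1) * ℓ + r = (q * ℓ + r) + ℓ := by ring
        rw [this, hHper, ih]
    conv_lhs => rw [← Nat.div_add_mod n ℓ, Nat.mul_comm]
    exact this _ _
  set C : ℝ := ∑ i ∈ Finset.range ℓ, |h i| with hC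
  have hHbound : ∀ n, |H n| ≤ C := by
    intro n
    rw [hHmod n]
    calc |H (n % ℓ)| ≤ ∑ i ∈ Finset.range (n % ℓ), |h i| :=
          Finset.abs_sum_le_sum_abs _ _
      _ ≤ C := Finset.sum_le_sum_of_subset_of_nonneg
          (Finset.range_subset_range.mpr (le_of_lt (Nat.mod_lt n hℓ)))
          (fun i _ _ => abs_nonneg _)
  -- the Cesàro sums
  have hS : ∀ n : ℕ, (∑ i ∈ Finset.range n, (EL a (i + 1) : ℝ)) = n * (T / ℓ) + H n := by
    intro n
    simp only [hH, hh, Finset.sum_sub_distrib, Finset.sum_const, Finset.card_range,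
      nsmul_eq_mul]
    ring
  have hzero : Tendsto (fun n : ℕ => H n / n) atTop (nhds 0) := by
    refine squeeze_zero_norm ?_ (tendsto_const_div_atTop_nhds_zero_nat C)
    · intro n
      rcases Nat.eq_zero_or_pos n with hn | hn
      · simp [hn]
      · rw [Real.norm_eq_abs, abs_div, abs_of_nonneg (by positivity : (0:ℝ) ≤ (n:ℝ))]
        apply div_le_div_of_nonneg_right (hHbound n)
        · positivity
  have hten : Tendsto (fun n : ℕ => (∑ i ∈ Finset.range n, (EL a (i + 1) : ℝ)) / n)
      atTop (nhds (T / ℓ)) := by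
    have heq : ∀ᶠ n : ℕ in atTop, T / ℓ + H n / n
        = (∑ i ∈ Finset.range n, (EL a (i + 1) : ℝ)) / n := by
      filter_upwards [eventually_ge_atTop 1] with n hn
      have hn0 : (n : ℝ) ≠ 0 := by positivity
      rw [hS n]
      field_simp
    refine Tendsto.congr' heq ?_
    have := (tendsto_const_nhds (x := T / ℓ) (f := atTop (α := ℕ))).add hzero
    simpa using this
  have htenE : Tendsto (fun n : ℕ => (((∑ i ∈ Finset.range n, (EL a (i + 1) : ℝ)) / n : ℝ)
      : EReal)) atTop (nhds ((T / ℓ : ℝ) : EReal)) := by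
    exact (continuous_coe_real_ereal.tendsto _).comp hten
  exact ⟨htenE.limsup_eq, htenE.liminf_eq⟩

end
end

section
/- Let a : ℕ → ℤ be a sequence decomposed into consecutive zero-sum blocks of bounded length, via cut points 0 = n₀ < n₁ < n₂ < … with EL(a, n_k) = 0 for all k and n_k − n_{k−1} ≤ ℓ for all k ≥ 1 (for a fixed ℓ ≥ 1). Then inf_{k≥1} A_k ≤ AEsup(a), where A_k = (1/L_k)·Σ_{j=n_{k−1}+1}^{n_k} EL(a, j) and L_k = n_k − n_{k−1}; i.e., repeating the best block forever yields an average-energy no larger than that of a. -/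
open Filter

noncomputable section

/-- Repeating the best block gives the lowest average-energy: for a sequence decomposed into
consecutive zero-sum blocks of bounded length, the infimum of the block average-energies
is at most the average-energy of the whole sequence.  The `k`-th block (between cut points
`n k` and `n (k+1)`) has average-energy
`A k = (∑ j ∈ Ioc (n k) (n (k+1)), EL a j) / (n (k+1) - n k)`. -/
theorem AE_best_block (a : ℕ → ℤ) (n : ℕ → ℕ) (ℓ : ℕ) (hℓ : 1 ≤ ℓ)
    (h0 : n 0 = 0) (hmono : StrictMono n)
    (hzero : ∀ k, EL a (n k) = 0)
    (hlen : ∀ k, n (k + 1) - n k ≤ ℓ) :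
    (⨅ k : ℕ, (((∑ j ∈ Finset.Ioc (n k) (n (k + 1)), (EL a j : ℝ)) /
        ((n (k + 1) - n k : ℕ) : ℝ) : ℝ) : EReal)) ≤ AEsup a := by
  by_contra h
  push_neg at h
  obtain ⟨c, hc1, hc2⟩ := EReal.exists_between_coe_real h
  -- each block length is positive
  have hLpos : ∀ k : ℕ, (0 : ℝ) < ((n (k + 1) - n k : ℕ) : ℝ) := by
    intro k
    have : 0 < n (k + 1) - n k := Nat.sub_pos_of_lt (hmono (Nat.lt_succ_self k))
    exact_mod_cast this
  have hLcast : ∀ k : ℕ, ((n (k + 1) - n k : ℕ) : ℝ) = (n (k + 1) : ℝ) - (n k : ℝ) := by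
    intro k
    exact_mod_cast Nat.cast_sub (le_of_lt (hmono (Nat.lt_succ_self k)))
  -- c is strictly below each block average
  have hck : ∀ k : ℕ, c * ((n (k + 1) - n k : ℕ) : ℝ) ≤
      ∑ j ∈ Finset.Ioc (n k) (n (k + 1)), (EL a j : ℝ) := by
    intro k
    have h1 : (c : EReal) < (((∑ j ∈ Finset.Ioc (n k) (n (k + 1)), (EL a j : ℝ)) /
        ((n (k + 1) - n k : ℕ) : ℝ) : ℝ) : EReal) := lt_of_lt_of_le hc2 (iInf_le _ k)
    have h2 : c < (∑ j ∈ Finset.Ioc (n k) (n (k + 1)), (EL a j : ℝ)) /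
        ((n (k + 1) - n k : ℕ) : ℝ) := by exact_mod_cast h1
    rw [lt_div_iff₀ (hLpos k)] at h2
    linarith
  -- telescoping: partial sums at cut points
  have hsum : ∀ K : ℕ, ∑ i ∈ Finset.range (n K), (EL a (i + 1) : ℝ) =
      ∑ k ∈ Finset.range K, ∑ j ∈ Finset.Ioc (n k) (n (k + 1)), (EL a j : ℝ) := by
    intro K
    induction K with
    | zero => simp [h0]
    | succ K ih =>
      rw [Finset.sum_range_succ, ← ih, Finset.range_eq_Ico,
        ← Finset.sum_Ico_consecutive _ (Nat.zero_le (n K)) (le_of_lt (hmono (Nat.lt_succ_self K)))]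
      congr 1
      · rw [Finset.range_eq_Ico]
      rw [Finset.sum_Ico_add' (fun i => (EL a i : ℝ)) (n K) (n (K + 1)) 1, Finset.Ico_add_one_add_one_eq_Ioc]
  -- hence c ≤ average at each cut point n K, K ≥ 1
  have hfreq : ∀ K : ℕ, c * (n K : ℝ) ≤ ∑ i ∈ Finset.range (n K), (EL a (i + 1) : ℝ) := by
    intro K
    rw [hsum K]
    calc c * (n K : ℝ) = ∑ k ∈ Finset.range K, c * ((n (k + 1) - n k : ℕ) : ℝ) := by
          rw [← Finset.mul_sum]
          congr 1
          have : ∑ k ∈ Finset.range K, ((n (k + 1) - n k : ℕ) : ℝ) =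
              (n K : ℝ) - (n 0 : ℝ) := by
            simp_rw [hLcast]
            exact Finset.sum_range_sub (fun k => (n k : ℝ)) K
          rw [this, h0]; simp
      _ ≤ _ := Finset.sum_le_sum (fun k _ => hck k)
  -- c ≤ limsup
  have hle : (c : EReal) ≤ AEsup a := by
    apply le_limsup_of_frequently_le _ (by isBoundedDefault)
    rw [frequently_atTop]
    intro N
    refine ⟨n (max N 1), le_trans (le_max_left N 1) (hmono.le_apply), ?_⟩
    have hpos : 0 < n (max N 1) := by
      have : n 0 < n (max N 1) := hmono (lt_of_lt_of_le Nat.one_pos (le_max_right N 1))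
      omega
    have hposℝ : (0 : ℝ) < (n (max N 1) : ℝ) := by exact_mod_cast hpos
    have := hfreq (max N 1)
    have h3 : c ≤ (∑ i ∈ Finset.range (n (max N 1)), (EL a (i + 1) : ℝ)) / (n (max N 1) : ℝ) := by
      rw [le_div_iff₀ hposℝ]; linarith
    exact_mod_cast h3
  exact absurd (lt_of_lt_of_le hc1 hle) (lt_irrefl _)

end
end

section
/- Let G be a game and s₀ an initial state. If there exists a rational t < 0 such that player 1 has a winning strategy from s₀ for MeanPayOff(t), then player 1 has a memoryless strategy from s₀ such that every play π consistent with it satisfies AEinf(π) = AEsup(π) = −∞; in particular this memoryless strategy is winning for AvgEnergyLevel(t') for every t' ∈ ℚ. -/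
open Filter

noncomputable section

/-- A two-player turn-based game on a (finite) state space `S`: `p1 s` holds iff state `s`
belongs to player 1 (otherwise it belongs to player 2), `E` is the edge relation (every state
has a successor), and `w` assigns an integer weight to every edge. -/
structure Game (S : Type) where
  p1 : S → Prop
  E : S → S → Prop
  w : S → S → ℤ
  succ : ∀ s, ∃ t, E s t

variable {S : Type}

/-- `π` is a play of `G` starting from `s₀`. -/
def IsPlay (G : Game S) (s₀ : S) (π : ℕ → S) : Prop :=
  π 0 = s₀ ∧ ∀ n, G.E (π n) (π (n + 1))

/-- Energy level of the play `π` at position `n`. -/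
def ELp (G : Game S) (π : ℕ → S) (n : ℕ) : ℤ :=
  ∑ i ∈ Finset.range n, G.w (π i) (π (i + 1))

/-- Average-energy of a play (limsup variant), in the extended reals. -/
def AEsupP (G : Game S) (π : ℕ → S) : EReal :=
  limsup (fun n : ℕ => (((∑ i ∈ Finset.range n, (ELp G π (i + 1) : ℝ)) / n : ℝ) : EReal)) atTop

/-- Average-energy of a play (liminf variant). -/
def AEinfP (G : Game S) (π : ℕ → S) : EReal :=
  liminf (fun n : ℕ => (((∑ i ∈ Finset.range n, (ELp G π (i + 1) : ℝ)) / n : ℝ) : EReal)) atTop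

/-- Mean-payoff of a play (limsup variant). -/
def MPsupP (G : Game S) (π : ℕ → S) : EReal :=
  limsup (fun n : ℕ => (((ELp G π n : ℝ) / n : ℝ) : EReal)) atTop

/-- Total-payoff of a play (limsup variant). -/
def TPsupP (G : Game S) (π : ℕ → S) : EReal :=
  limsup (fun n : ℕ => ((ELp G π n : ℝ) : EReal)) atTop

/-- The history (finite prefix) `π 0, …, π n` of a play, as a list. -/
def hist (π : ℕ → S) (n : ℕ) : List S := List.ofFn (fun i : Fin (n + 1) => π i)

/-- A (deterministic) strategy for player 1: on every nonempty finite path of `G` ending in a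
player-1 state, it prescribes an `E`-successor of the last state. -/
def IsStrat1 (G : Game S) (σ : List S → S) : Prop :=
  ∀ (ρ : List S) (h : ρ ≠ []), List.Chain' G.E ρ → G.p1 (ρ.getLast h) →
    G.E (ρ.getLast h) (σ ρ)

/-- A strategy for player 2 (who owns the states where `p1` fails). -/
def IsStrat2 (G : Game S) (σ : List S → S) : Prop :=
  ∀ (ρ : List S) (h : ρ ≠ []), List.Chain' G.E ρ → ¬ G.p1 (ρ.getLast h) →
    G.E (ρ.getLast h) (σ ρ)

/-- A strategy is memoryless if its choice only depends on the last state of the history. -/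
def Memoryless (σ : List S → S) : Prop :=
  ∀ (ρ ρ' : List S) (h : ρ ≠ []) (h' : ρ' ≠ []),
    ρ.getLast h = ρ'.getLast h' → σ ρ = σ ρ'

/-- The play `π` is consistent with the player-1 strategy `σ`. -/
def Consistent1 (G : Game S) (σ : List S → S) (π : ℕ → S) : Prop :=
  ∀ n, G.p1 (π n) → π (n + 1) = σ (hist π n)

/-- The play `π` is consistent with the player-2 strategy `σ`. -/
def Consistent2 (G : Game S) (σ : List S → S) (π : ℕ → S) : Prop :=
  ∀ n, ¬ G.p1 (π n) → π (n + 1) = σ (hist π n)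

/-- `σ` is a winning strategy for player 1 from `s₀` for the objective `Obj`:
every consistent play from `s₀` belongs to `Obj`. -/
def Winning1 (G : Game S) (s₀ : S) (σ : List S → S) (Obj : (ℕ → S) → Prop) : Prop :=
  IsStrat1 G σ ∧ ∀ π, IsPlay G s₀ π → Consistent1 G σ π → Obj π

/-- `σ` is a winning strategy for player 2 from `s₀` against the objective `Obj`:
every consistent play from `s₀` lies outside `Obj`. -/
def Winning2 (G : Game S) (s₀ : S) (σ : List S → S) (Obj : (ℕ → S) → Prop) : Prop :=
  IsStrat2 G σ ∧ ∀ π, IsPlay G s₀ π → Consistent2 G σ π → ¬ Obj π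

/-- Average-energy objective: the average-energy of the play is at most `t`. -/
def AvgEnergyLevel (G : Game S) (t : ℚ) : (ℕ → S) → Prop :=
  fun π => AEsupP G π ≤ ((t : ℝ) : EReal)

/-- Mean-payoff objective: the mean-payoff of the play is at most `t`. -/
def MeanPayOff (G : Game S) (t : ℚ) : (ℕ → S) → Prop :=
  fun π => MPsupP G π ≤ ((t : ℝ) : EReal)

/-- Total-payoff objective: the total-payoff of the play is at most `t`. -/
def TotalPayOff (G : Game S) (t : ℤ) : (ℕ → S) → Prop :=
  fun π => TPsupP G π ≤ ((t : ℝ) : EReal)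

/-- Lower-bounded energy objective with initial credit `c₀`. -/
def LowerObj (G : Game S) (c₀ : ℕ) : (ℕ → S) → Prop :=
  fun π => ∀ n, 0 ≤ (c₀ : ℤ) + ELp G π n

/-- Lower- and upper-bounded energy objective with upper bound `U` and initial credit `c₀`. -/
def LUObj (G : Game S) (U c₀ : ℕ) : (ℕ → S) → Prop :=
  fun π => ∀ n, 0 ≤ (c₀ : ℤ) + ELp G π n ∧ (c₀ : ℤ) + ELp G π n ≤ (U : ℤ)


namespace MPAE
open Classical
/-- `(x + a)⁺` in `ℕ∞`, with `⊤` absorbing. -/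
def opE (x : ℕ∞) (a : ℤ) : ℕ∞ :=
  match x with
  | ⊤ => ⊤
  | (n : ℕ) => (((n : ℤ) + a).toNat : ℕ∞)

@[simp] lemma opE_top (a : ℤ) : opE ⊤ a = ⊤ := rfl

@[simp] lemma opE_coe (n : ℕ) (a : ℤ) : opE (n : ℕ∞) a = (((n : ℤ) + a).toNat : ℕ∞) := rfl

lemma opE_eq_top_iff {x : ℕ∞} {a : ℤ} : opE x a = ⊤ ↔ x = ⊤ := by
  cases x with
  | top => simp
  | coe n => simp [opE]

lemma opE_mono {x y : ℕ∞} (a : ℤ) (h : x ≤ y) : opE x a ≤ opE y a := by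
  cases y with
  | top => simp
  | coe m =>
    cases x with
    | top => simp at h
    | coe n =>
      simp only [opE_coe, Nat.cast_le] at h ⊢
      exact Int.toNat_le_toNat (by exact_mod_cast add_le_add_left (by exact_mod_cast h) a)

/-- `x + a ≤ opE x a` as integers, when `x` is finite. -/
lemma le_opE_toNat {x : ℕ∞} (hx : x ≠ ⊤) (a : ℤ) :
    (x.toNat : ℤ) + a ≤ ((opE x a).toNat : ℤ) := by
  lift x to ℕ using hx
  simp only [opE_coe, ENat.toNat_coe]
  exact Int.self_le_toNat _

lemma lt_opE {c : ℕ} {x : ℕ∞} {a : ℤ} (h : (c : ℕ∞) < opE x a) (hx : x ≠ ⊤)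
    (hca : 0 ≤ (c : ℤ) - a) : ((((c : ℤ) - a).toNat : ℕ∞)) < x := by
  lift x to ℕ using hx
  simp only [opE_coe, Nat.cast_lt] at h
  have : ((c : ℤ) - a).toNat < x := by omega
  exact_mod_cast this

lemma opE_add_le (x : ℕ∞) (a : ℤ) (B : ℕ) : opE (x + B) a ≤ opE x a + B := by
  cases x with
  | top => simp
  | coe n =>
    have : ((n : ℕ∞) + (B : ℕ∞)) = ((n + B : ℕ) : ℕ∞) := by exact_mod_cast rfl
    rw [this]
    simp only [opE_coe]
    have : (((n + B : ℕ) : ℤ) + a).toNat ≤ ((n : ℤ) + a).toNat + B := by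
      omega
    calc ((((n + B : ℕ) : ℤ) + a).toNat : ℕ∞) ≤ ((((n : ℤ) + a).toNat + B : ℕ) : ℕ∞) := by
          exact_mod_cast this
      _ = (((n : ℤ) + a).toNat : ℕ∞) + B := by push_cast; ring

lemma opE_le_of_le {x : ℕ∞} {m : ℕ} (h : x ≤ (m : ℕ∞)) (a : ℤ) :
    opE x a ≤ ((m + a.natAbs : ℕ) : ℕ∞) := by
  cases x with
  | top => simp at h
  | coe n =>
    have hn : n ≤ m := by exact_mod_cast h
    simp only [opE_coe]
    have : ((n : ℤ) + a).toNat ≤ m + a.natAbs := by omega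
    exact_mod_cast this


variable {S : Type}

/-- one-step operator of the energy game with weights `u`, where player 2's
moves are restricted to `P`. -/
def LL (G : Game S) (u : S → S → ℤ) (P : S → S → Prop) (f : S → ℕ∞) (s : S) : ℕ∞ :=
  if G.p1 s then ⨅ t : {t // G.E s t}, opE (f t.1) (u s t.1)
  else ⨆ t : {t // P s t}, opE (f t.1) (u s t.1)

lemma LL_mono (G : Game S) (u : S → S → ℤ) (P : S → S → Prop) :
    Monotone (LL G u P) := by
  intro f g hfg s
  unfold LL
  split
  · exact iInf_mono fun t => opE_mono _ (hfg t.1)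
  · exact iSup_mono fun t => opE_mono _ (hfg t.1)

/-- the operator as an order hom. -/
def LLhom (G : Game S) (u : S → S → ℤ) (P : S → S → Prop) : (S → ℕ∞) →o (S → ℕ∞) :=
  ⟨LL G u P, LL_mono G u P⟩

/-- least fixed point for the unrestricted game. -/
def fstar (G : Game S) (u : S → S → ℤ) : S → ℕ∞ :=
  OrderHom.lfp (LLhom G u G.E)

lemma fstar_fix (G : Game S) (u : S → S → ℤ) (s : S) :
    LL G u G.E (fstar G u) s = fstar G u s :=
  congrFun (OrderHom.map_lfp (LLhom G u G.E)) s

lemma iInf_attained {ι : Type*} [Finite ι] [Nonempty ι] (g : ι → ℕ∞) :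
    ∃ i, g i = ⨅ j, g j := by
  obtain ⟨i, hi⟩ : ∃ i, ∀ j, g i ≤ g j := Finite.exists_min g
  exact ⟨i, le_antisymm (le_iInf hi) (iInf_le _ _)⟩

lemma iSup_attained {ι : Type*} [Finite ι] [Nonempty ι] (g : ι → ℕ∞) :
    ∃ i, g i = ⨆ j, g j := by
  obtain ⟨i, hi⟩ : ∃ i, ∀ j, g j ≤ g i := Finite.exists_max g
  exact ⟨i, le_antisymm (le_iSup _ _) (iSup_le hi)⟩

section fin
variable [Fintype S] (G : Game S) (u : S → S → ℤ)

set_option linter.unusedSectionVars false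

lemma fstar_p1_top {s : S} (hp : G.p1 s) (hs : fstar G u s = ⊤) :
    ∀ t, G.E s t → fstar G u t = ⊤ := by
  intro t ht
  have h1 : LL G u G.E (fstar G u) s = ⊤ := by rw [fstar_fix, hs]
  unfold LL at h1
  rw [if_pos hp] at h1
  have h2 : opE (fstar G u t) (u s t) = ⊤ :=
    top_unique (h1 ▸ iInf_le (fun t : {t // G.E s t} => opE (fstar G u t.1) (u s t.1)) ⟨t, ht⟩)
  exact opE_eq_top_iff.mp h2

lemma fstar_p1_fin {s : S} (hp : G.p1 s) (hs : fstar G u s ≠ ⊤) :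
    ∃ t, G.E s t ∧ fstar G u t ≠ ⊤ ∧
      ((fstar G u t).toNat : ℤ) + u s t ≤ ((fstar G u s).toNat : ℤ) := by
  have h1 : LL G u G.E (fstar G u) s = fstar G u s := fstar_fix G u s
  unfold LL at h1
  rw [if_pos hp] at h1
  haveI : Nonempty {t // G.E s t} := ⟨⟨_, (G.succ s).choose_spec⟩⟩
  obtain ⟨⟨t, ht⟩, hmin⟩ := iInf_attained (fun t : {t // G.E s t} => opE (fstar G u t.1) (u s t.1))
  have hop : opE (fstar G u t) (u s t) = fstar G u s := by rw [hmin]; exact h1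
  have htne : fstar G u t ≠ ⊤ := by
    intro hT; rw [hT, opE_top] at hop; exact hs hop.symm
  refine ⟨t, ht, htne, ?_⟩
  have := le_opE_toNat htne (u s t)
  rw [hop] at this
  exact this

lemma fstar_p2_fin {s : S} (hp : ¬ G.p1 s) (hs : fstar G u s ≠ ⊤) :
    ∀ t, G.E s t → fstar G u t ≠ ⊤ ∧
      ((fstar G u t).toNat : ℤ) + u s t ≤ ((fstar G u s).toNat : ℤ) := by
  intro t ht
  have h1 : LL G u G.E (fstar G u) s = fstar G u s := fstar_fix G u s
  unfold LL at h1
  rw [if_neg hp] at h1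
  have hle : opE (fstar G u t) (u s t) ≤ fstar G u s := by
    rw [← h1]
    exact le_iSup (fun t : {t // G.E s t} => opE (fstar G u t.1) (u s t.1)) ⟨t, ht⟩
  have htne : fstar G u t ≠ ⊤ := by
    intro hT; rw [hT, opE_top] at hle
    exact hs (top_le_iff.mp hle)
  refine ⟨htne, le_trans (le_opE_toNat htne (u s t)) ?_⟩
  have h2 : (opE (fstar G u t) (u s t)).toNat ≤ (fstar G u s).toNat :=
    ENat.toNat_le_toNat hle hs
  exact_mod_cast h2

lemma fstar_p2_top {s : S} (hp : ¬ G.p1 s) (hs : fstar G u s = ⊤) :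
    ∃ t, G.E s t ∧ fstar G u t = ⊤ := by
  have h1 : LL G u G.E (fstar G u) s = fstar G u s := fstar_fix G u s
  unfold LL at h1
  rw [if_neg hp, hs] at h1
  haveI : Nonempty {t // G.E s t} := ⟨⟨_, (G.succ s).choose_spec⟩⟩
  obtain ⟨⟨t, ht⟩, hmax⟩ := iSup_attained (fun t : {t // G.E s t} => opE (fstar G u t.1) (u s t.1))
  have h2 : opE (fstar G u t) (u s t) = ⊤ := by rw [hmax]; exact h1
  exact ⟨t, ht, opE_eq_top_iff.mp h2⟩

end fin

/-- player-2 edges restricted to the `⊤`-region of `fstar`. -/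
def Erest (G : Game S) (u : S → S → ℤ) : S → S → Prop :=
  fun s t => G.E s t ∧ fstar G u t = ⊤

/-- finite iterates of the restricted operator from `⊥`. -/
def iterL (G : Game S) (u : S → S → ℤ) (k : ℕ) : S → ℕ∞ :=
  (LLhom G u (Erest G u))^[k] ⊥

/-- least fixed point of the restricted operator. -/
def fpr (G : Game S) (u : S → S → ℤ) : S → ℕ∞ :=
  OrderHom.lfp (LLhom G u (Erest G u))

lemma iterL_mono (G : Game S) (u : S → S → ℤ) : Monotone (iterL G u) := by
  have hstep : ∀ k, iterL G u k ≤ iterL G u (k + 1) := by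
    intro k
    induction k with
    | zero => exact bot_le
    | succ n ih =>
      show (LLhom G u (Erest G u))^[n+1] ⊥ ≤ (LLhom G u (Erest G u))^[n+1+1] ⊥
      rw [Function.iterate_succ_apply', Function.iterate_succ_apply']
      exact LL_mono G u (Erest G u) ih
  exact monotone_nat_of_le_succ hstep

lemma iterL_succ (G : Game S) (u : S → S → ℤ) (k : ℕ) :
    iterL G u (k + 1) = LL G u (Erest G u) (iterL G u k) := by
  unfold iterL
  rw [Function.iterate_succ_apply']
  rfl

section fin
variable [Fintype S] (G : Game S) (u : S → S → ℤ)

set_option linter.unusedSectionVars false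

lemma iterL_ne_top : ∀ k s, iterL G u k s ≠ ⊤ := by
  intro k
  induction k with
  | zero => intro s; simp [iterL]
  | succ n ih =>
    intro s
    rw [iterL_succ]
    unfold LL
    split
    · haveI : Nonempty {t // G.E s t} := ⟨⟨_, (G.succ s).choose_spec⟩⟩
      intro hT
      obtain ⟨⟨t, ht⟩, hmin⟩ :=
        iInf_attained (fun t : {t // G.E s t} => opE (iterL G u n t.1) (u s t.1))
      rw [← hmin] at hT
      exact ih t (opE_eq_top_iff.mp hT)
    · by_cases hne : Nonempty {t // Erest G u s t}
      · intro hT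
        obtain ⟨⟨t, ht⟩, hmax⟩ :=
          iSup_attained (fun t : {t // Erest G u s t} => opE (iterL G u n t.1) (u s t.1))
        rw [← hmax] at hT
        exact ih t (opE_eq_top_iff.mp hT)
      · haveI := not_nonempty_iff.mp hne
        rw [iSup_of_empty]
        simp
end fin

lemma iSup_nat_attained (x : ℕ → ℕ∞) (h : ⨆ k, x k ≠ ⊤) : ∃ k, x k = ⨆ k, x k := by
  set m := ⨆ k, x k with hm
  lift m to ℕ using h with n hn
  by_contra hno
  push_neg at hno
  have hlt : ∀ k, x k < (n : ℕ∞) := fun k =>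
    lt_of_le_of_ne (hn ▸ le_iSup x k) (hno k)
  have hpos : 0 < n := by
    by_contra h0
    push_neg at h0
    have h0' : n = 0 := Nat.le_zero.mp h0
    have := hlt 0
    rw [h0'] at this
    simp at this
  have hle : ∀ k, x k ≤ ((n - 1 : ℕ) : ℕ∞) := by
    intro k
    have hxk := hlt k
    have hne : x k ≠ ⊤ := ne_top_of_lt hxk
    lift x k to ℕ using hne with y hy
    have : y < n := by exact_mod_cast hxk
    exact_mod_cast Nat.le_sub_one_of_lt this
  have : ((n : ℕ∞)) ≤ ((n - 1 : ℕ) : ℕ∞) := hn ▸ iSup_le hle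
  have : n ≤ n - 1 := by exact_mod_cast this
  omega

lemma lt_opE_of_lt {N : ℕ} {a : ℤ} {x : ℕ∞} (h : ((N + a.natAbs : ℕ) : ℕ∞) < x) :
    (N : ℕ∞) < opE x a := by
  cases x with
  | top => simp [opE_top]
  | coe y =>
    have hy : N + a.natAbs < y := by exact_mod_cast h
    simp only [opE_coe]
    have : N < ((y : ℤ) + a).toNat := by omega
    exact_mod_cast this

lemma opE_iSup_le (x : ℕ → ℕ∞) (a : ℤ) :
    opE (⨆ k, x k) a ≤ ⨆ k, opE (x k) a := by
  by_cases h : ⨆ k, x k = ⊤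
  · rw [h, opE_top]
    rw [top_le_iff, iSup_eq_top]
    intro b hb
    lift b to ℕ using ne_top_of_lt hb with N
    have h2 : ((N + a.natAbs : ℕ) : ℕ∞) < ⨆ k, x k := by
      rw [h]; exact lt_of_le_of_ne le_top (by simp [← Nat.cast_add])
    obtain ⟨k, hk⟩ := lt_iSup_iff.mp h2
    exact ⟨k, lt_opE_of_lt hk⟩
  · obtain ⟨k, hk⟩ := iSup_nat_attained x h
    rw [← hk]
    exact le_iSup (fun k => opE (x k) a) k

lemma iInf_iSup_le {ι : Type*} [Finite ι] [Nonempty ι] (g : ι → ℕ → ℕ∞)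
    (hmono : ∀ i, Monotone (g i)) :
    ⨅ i, ⨆ k, g i k ≤ ⨆ k, ⨅ i, g i k := by
  by_contra hcon
  push_neg at hcon
  set R := ⨆ k, ⨅ i, g i k with hR
  have hRtop : R ≠ ⊤ := ne_top_of_lt hcon
  have hex : ∀ i, ∃ k, R < g i k := by
    intro i
    have : R < ⨆ k, g i k := lt_of_lt_of_le hcon (iInf_le _ i)
    exact lt_iSup_iff.mp this
  choose kk hkk using hex
  obtain ⟨i₀, hi₀⟩ : ∃ i₀, ∀ i, kk i ≤ kk i₀ := Finite.exists_max kk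
  have hall : ∀ i, R < g i (kk i₀) := fun i => lt_of_lt_of_le (hkk i) (hmono i (hi₀ i))
  obtain ⟨i₁, hi₁⟩ := iInf_attained (fun i => g i (kk i₀))
  have : R < ⨅ i, g i (kk i₀) := hi₁ ▸ hall i₁
  exact absurd this (not_lt.mpr (le_iSup (fun k => ⨅ i, g i k) (kk i₀)))

section fin2
variable [Fintype S] (G : Game S) (u : S → S → ℤ)

set_option linter.unusedSectionVars false

/-- pointwise supremum of the iterates. -/
def fsup : S → ℕ∞ := fun s => ⨆ k, iterL G u k s

lemma fsup_prefix : LL G u (Erest G u) (fsup G u) ≤ fsup G u := by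
  intro s
  unfold LL
  split
  case isTrue hp =>
    haveI : Nonempty {t // G.E s t} := ⟨⟨_, (G.succ s).choose_spec⟩⟩
    calc ⨅ t : {t // G.E s t}, opE (fsup G u t.1) (u s t.1)
        ≤ ⨅ t : {t // G.E s t}, ⨆ k, opE (iterL G u k t.1) (u s t.1) :=
          iInf_mono fun t => opE_iSup_le _ _
      _ ≤ ⨆ k, ⨅ t : {t // G.E s t}, opE (iterL G u k t.1) (u s t.1) :=
          iInf_iSup_le _ (fun t k₁ k₂ hk => opE_mono _ (iterL_mono G u hk t.1))
      _ ≤ fsup G u s := by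
          apply iSup_le
          intro k
          have : ⨅ t : {t // G.E s t}, opE (iterL G u k t.1) (u s t.1)
              = iterL G u (k+1) s := by
            rw [iterL_succ]; unfold LL; rw [if_pos hp]
          rw [this]
          exact le_iSup (fun k => iterL G u k s) (k+1)
  case isFalse hp =>
    apply iSup_le
    rintro ⟨t, ht⟩
    calc opE (fsup G u t) (u s t) ≤ ⨆ k, opE (iterL G u k t) (u s t) := opE_iSup_le _ _
      _ ≤ fsup G u s := by
          apply iSup_le
          intro k
          have h1 : opE (iterL G u k t) (u s t) ≤ iterL G u (k+1) s := by
            rw [iterL_succ]; unfold LL; rw [if_neg hp]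
            exact le_iSup (fun t' : {t' // Erest G u s t'} => opE (iterL G u k t'.1) (u s t'.1)) ⟨t, ht⟩
          exact le_trans h1 (le_iSup (fun k => iterL G u k s) (k+1))

lemma fpr_le_fsup : fpr G u ≤ fsup G u :=
  OrderHom.lfp_le _ (fsup_prefix G u)

/-- Claim 2: the `⊤`-region of `fstar` is also `⊤` for the restricted fixpoint. -/
lemma fpr_top_of_fstar_top : ∀ s, fstar G u s = ⊤ → fpr G u s = ⊤ := by
  classical
  set W : ℕ := Finset.univ.sup (fun p : S × S => (u p.1 p.2).natAbs) with hW
  set m : ℕ := Finset.univ.sup (fun s => (fstar G u s).toNat) with hm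
  set B : ℕ := m + W with hB
  set g : S → ℕ∞ := fun s =>
    if fstar G u s = ⊤ then (if fpr G u s = ⊤ then ⊤ else fpr G u s + B) else fstar G u s
    with hg
  have hWle : ∀ s t : S, (u s t).natAbs ≤ W := fun s t =>
    Finset.le_sup (f := fun p : S × S => (u p.1 p.2).natAbs) (Finset.mem_univ (s, t))
  have hmle : ∀ s : S, fstar G u s ≠ ⊤ → fstar G u s ≤ (m : ℕ∞) := by
    intro s hs
    rw [← ENat.coe_toNat hs]
    exact_mod_cast Finset.le_sup (f := fun s => (fstar G u s).toNat) (Finset.mem_univ s)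
  have hg_le : g ≤ fstar G u := by
    intro s
    by_cases hs : fstar G u s = ⊤
    · rw [hs]; exact le_top
    · simp only [hg, if_neg hs]; exact le_refl _
  have hpre : LL G u G.E g ≤ g := by
    intro s
    by_cases hs : fstar G u s = ⊤
    · by_cases hv : fpr G u s = ⊤
      · simp only [hg, if_pos hs, if_pos hv]; exact le_top
      · have hgs : g s = fpr G u s + B := by simp only [hg, if_pos hs, if_neg hv]
        rw [hgs]
        have hfix : LL G u (Erest G u) (fpr G u) s = fpr G u s :=
          congrFun (OrderHom.map_lfp (LLhom G u (Erest G u))) s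
        unfold LL at hfix ⊢
        by_cases hp : G.p1 s
        · rw [if_pos hp] at hfix ⊢
          haveI : Nonempty {t // G.E s t} := ⟨⟨_, (G.succ s).choose_spec⟩⟩
          obtain ⟨⟨t, ht⟩, hmin⟩ :=
            iInf_attained (fun t : {t // G.E s t} => opE (fpr G u t.1) (u s t.1))
          have hop : opE (fpr G u t) (u s t) = fpr G u s := by rw [hmin]; exact hfix
          have htne : fpr G u t ≠ ⊤ := by
            intro hT; rw [hT, opE_top] at hop; exact hv hop.symm
          have htop : fstar G u t = ⊤ := fstar_p1_top G u hp hs t ht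
          have hgt : g t = fpr G u t + B := by simp only [hg, if_pos htop, if_neg htne]
          calc ⨅ t' : {t' // G.E s t'}, opE (g t'.1) (u s t'.1)
              ≤ opE (g t) (u s t) :=
                iInf_le (fun t' : {t' // G.E s t'} => opE (g t'.1) (u s t'.1)) ⟨t, ht⟩
            _ = opE (fpr G u t + B) (u s t) := by rw [hgt]
            _ ≤ opE (fpr G u t) (u s t) + B := opE_add_le _ _ _
            _ = fpr G u s + B := by rw [hop]
        · rw [if_neg hp] at hfix ⊢
          apply iSup_le
          rintro ⟨t, ht⟩
          by_cases htop : fstar G u t = ⊤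
          · have hrest : Erest G u s t := ⟨ht, htop⟩
            have hle : opE (fpr G u t) (u s t) ≤ fpr G u s := by
              rw [← hfix]
              exact le_iSup (fun t' : {t' // Erest G u s t'} => opE (fpr G u t'.1) (u s t'.1)) ⟨t, hrest⟩
            have htne : fpr G u t ≠ ⊤ := by
              intro hT; rw [hT, opE_top] at hle; exact hv (top_le_iff.mp hle)
            have hgt : g t = fpr G u t + B := by simp only [hg, if_pos htop, if_neg htne]
            calc opE (g t) (u s t) = opE (fpr G u t + B) (u s t) := by rw [hgt]
              _ ≤ opE (fpr G u t) (u s t) + B := opE_add_le _ _ _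
              _ ≤ fpr G u s + B := add_le_add_left hle _
          · have hgt : g t = fstar G u t := by simp only [hg, if_neg htop]
            have h1 : opE (g t) (u s t) ≤ ((m + (u s t).natAbs : ℕ) : ℕ∞) := by
              rw [hgt]; exact opE_le_of_le (hmle t htop) _
            have h2 : ((m + (u s t).natAbs : ℕ) : ℕ∞) ≤ (B : ℕ∞) := by
              rw [hB]; exact_mod_cast add_le_add_right (hWle s t) m
            calc opE (g t) (u s t) ≤ (B : ℕ∞) := le_trans h1 h2
              _ ≤ fpr G u s + B := le_add_self
    · have hgs : g s = fstar G u s := by simp only [hg, if_neg hs]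
      calc LL G u G.E g s ≤ LL G u G.E (fstar G u) s := LL_mono G u G.E hg_le s
        _ = fstar G u s := fstar_fix G u s
        _ = g s := hgs.symm
  have hlfp : fstar G u ≤ g := OrderHom.lfp_le _ hpre
  intro s hs
  have : g s = ⊤ := top_le_iff.mp (hs ▸ hlfp s)
  by_contra hv
  rw [hg] at this
  simp only [if_pos hs, if_neg hv] at this
  exact hv (by
    have hBne : (B : ℕ∞) ≠ ⊤ := by simp
    rcases WithTop.add_eq_top.mp this with h | h
    · exact h
    · exact absurd h hBne)

/-- if `fstar s = ⊤`, the restricted iterates exceed every finite bound at `s`. -/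
lemma exists_iter_gt {s : S} (hs : fstar G u s = ⊤) (c : ℕ) :
    ∃ k, (c : ℕ∞) < iterL G u k s := by
  have h1 : fpr G u s = ⊤ := fpr_top_of_fstar_top G u s hs
  have h2 : fsup G u s = ⊤ := top_le_iff.mp (h1 ▸ fpr_le_fsup G u s)
  have h3 : (c : ℕ∞) < ⨆ k, iterL G u k s := by
    rw [show (⨆ k, iterL G u k s) = fsup G u s from rfl, h2]
    exact lt_of_le_of_ne le_top (by simp)
  exact lt_iSup_iff.mp h3

end fin2

/-- player 2 can force, within `k` steps, the relative energy (w.r.t. `u`) to exceed `c`,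
staying in the `⊤`-region of `fstar`. -/
def Force (G : Game S) (u : S → S → ℤ) : ℕ → S → ℤ → Prop
  | 0, _, c => c < 0
  | k+1, s, c => c < 0 ∨
      ((G.p1 s ∧ ∀ t, G.E s t → Force G u k t (c - u s t)) ∨
       (¬ G.p1 s ∧ ∃ t, G.E s t ∧ fstar G u t = ⊤ ∧ Force G u k t (c - u s t)))

lemma force_of_neg (G : Game S) (u : S → S → ℤ) {k : ℕ} {s : S} {c : ℤ} (hc : c < 0) :
    Force G u k s c := by
  cases k with
  | zero => exact hc
  | succ n => exact Or.inl hc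

section fin3
variable [Fintype S] (G : Game S) (u : S → S → ℤ)

set_option linter.unusedSectionVars false

/-- Claim 1: if the `k`-th restricted iterate exceeds `c` at `s`, player 2 can force
a relative-energy gain `> c` within `k` steps. -/
lemma force_of_lt_iter : ∀ (k : ℕ) (s : S) (c : ℤ), 0 ≤ c →
    (c.toNat : ℕ∞) < iterL G u k s → Force G u k s c := by
  intro k
  induction k with
  | zero =>
    intro s c _ hlt
    exact absurd hlt (by simp [iterL])
  | succ n ih =>
    intro s c hc hlt
    rw [iterL_succ] at hlt
    unfold LL at hlt
    by_cases hp : G.p1 s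
    · rw [if_pos hp] at hlt
      refine Or.inr (Or.inl ⟨hp, ?_⟩)
      intro t ht
      have hlt' : (c.toNat : ℕ∞) < opE (iterL G u n t) (u s t) :=
        lt_of_lt_of_le hlt
          (iInf_le (fun t' : {t' // G.E s t'} => opE (iterL G u n t'.1) (u s t'.1)) ⟨t, ht⟩)
      by_cases hcu : c - u s t < 0
      · exact force_of_neg G u hcu
      · push_neg at hcu
        have hfin := iterL_ne_top G u n t
        have hct : ((c.toNat : ℤ)) = c := Int.toNat_of_nonneg hc
        have h2 : (((c.toNat : ℤ) - u s t).toNat : ℕ∞) < iterL G u n t :=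
          lt_opE hlt' hfin (by rw [hct]; exact hcu)
        rw [hct] at h2
        exact ih t (c - u s t) hcu h2
    · rw [if_neg hp] at hlt
      obtain ⟨⟨t, ht⟩, hlt'⟩ := lt_iSup_iff.mp hlt
      refine Or.inr (Or.inr ⟨hp, t, ht.1, ht.2, ?_⟩)
      by_cases hcu : c - u s t < 0
      · exact force_of_neg G u hcu
      · push_neg at hcu
        have hfin := iterL_ne_top G u n t
        have hct : ((c.toNat : ℤ)) = c := Int.toNat_of_nonneg hc
        have h2 : (((c.toNat : ℤ) - u s t).toNat : ℕ∞) < iterL G u n t :=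
          lt_opE hlt' hfin (by rw [hct]; exact hcu)
        rw [hct] at h2
        exact ih t (c - u s t) hcu h2

lemma force_exists {s : S} (hs : fstar G u s = ⊤) (c : ℤ) (hc : 0 ≤ c) :
    ∃ k, Force G u k s c := by
  obtain ⟨k, hk⟩ := exists_iter_gt G u hs c.toNat
  exact ⟨k, force_of_lt_iter G u k s c hc hk⟩

lemma force_pos_k {k : ℕ} {s : S} {c : ℤ} (hf : Force G u k s c) (hc : 0 ≤ c) :
    ∃ k', k = k' + 1 := by
  cases k with
  | zero => exact absurd hf (by simp [Force]; omega)
  | succ n => exact ⟨n, rfl⟩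

end fin3

/-! ### history utilities -/

lemma getLastD_eq_getLast (l : List S) (h : l ≠ []) (d : S) : l.getLastD d = l.getLast h := by
  cases l with
  | nil => exact absurd rfl h
  | cons a l => rw [List.getLast_eq_getLastD, List.getLastD_cons]

lemma hist_zero (π : ℕ → S) : hist π 0 = [π 0] := rfl

lemma hist_ne_nil (π : ℕ → S) (n : ℕ) : hist π n ≠ [] := by
  unfold hist
  intro h
  have := congrArg List.length h
  simp at this

lemma hist_succ (π : ℕ → S) (n : ℕ) : hist π (n + 1) = hist π n ++ [π (n + 1)] := by
  unfold hist
  rw [List.ofFn_succ']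
  simp [List.concat_eq_append, Fin.coe_castSucc]

lemma hist_getLastD (π : ℕ → S) (n : ℕ) (d : S) : (hist π n).getLastD d = π n := by
  cases n with
  | zero => rfl
  | succ m => rw [hist_succ, List.getLastD_concat]

lemma hist_getLast (π : ℕ → S) (n : ℕ) (h : hist π n ≠ []) : (hist π n).getLast h = π n := by
  rw [← getLastD_eq_getLast _ h (π n), hist_getLastD]

lemma hist_chain' (G : Game S) (π : ℕ → S) (hplay : ∀ m, G.E (π m) (π (m + 1))) (n : ℕ) :
    List.Chain' G.E (hist π n) := by
  induction n with
  | zero => exact List.isChain_singleton _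
  | succ m ih =>
    rw [hist_succ]
    show List.IsChain _ _; rw [List.isChain_append]
    refine ⟨ih, List.isChain_singleton _, ?_⟩
    intro x hx y hy
    rw [List.getLast?_eq_getLast (hist_ne_nil π m)] at hx
    simp only [List.head?_cons, Option.mem_def, Option.some.injEq] at hx hy
    rw [← hx, ← hy]
    rw [hist_getLast]
    exact hplay m

/-- energy level w.r.t. an auxiliary weight function. -/
def ELu (u : S → S → ℤ) (π : ℕ → S) (n : ℕ) : ℤ :=
  ∑ i ∈ Finset.range n, u (π i) (π (i + 1))

lemma ELu_zero (u : S → S → ℤ) (π : ℕ → S) : ELu u π 0 = 0 := rfl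

lemma ELu_succ (u : S → S → ℤ) (π : ℕ → S) (n : ℕ) :
    ELu u π (n + 1) = ELu u π n + u (π n) (π (n + 1)) := by
  unfold ELu
  rw [Finset.sum_range_succ]

lemma chain'_snoc {R : S → S → Prop} {l : List S} {b : S} (hl : List.Chain' R l)
    (hne : l ≠ []) (d : S) (h : R (l.getLastD d) b) : List.Chain' R (l ++ [b]) := by
  show List.IsChain _ _; rw [List.isChain_append]
  refine ⟨hl, List.isChain_singleton _, ?_⟩
  intro x hx y hy
  rw [List.getLast?_eq_getLast hne] at hx
  simp only [List.head?_cons, Option.mem_def, Option.some.injEq] at hx hy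
  rw [← hx, ← hy, ← getLastD_eq_getLast l hne d]
  exact h

/-! ### the forcing play -/

def sOf (s₀ : S) (p : List S × ℕ × ℤ × ℤ) : S := p.1.getLastD s₀

def KP (G : Game S) (u : S → S → ℤ) (s₀ : S) (p : List S × ℕ × ℤ × ℤ) : ℕ :=
  if p.2.2.1 < 0 then
    (if h : ∃ k', (((max (1 - p.2.2.2) 1).toNat : ℕ∞)) < iterL G u k' (sOf s₀ p)
      then Classical.choose h else 0)
  else p.2.1

def CP (p : List S × ℕ × ℤ × ℤ) : ℤ :=
  if p.2.2.1 < 0 then max (1 - p.2.2.2) 1 else p.2.2.1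

def nextP (G : Game S) (u : S → S → ℤ) (σ₀ : List S → S) (s₀ : S)
    (p : List S × ℕ × ℤ × ℤ) : S :=
  if G.p1 (sOf s₀ p) then σ₀ p.1
  else if h : ∃ t', G.E (sOf s₀ p) t' ∧ fstar G u t' = ⊤ ∧
      Force G u (KP G u s₀ p - 1) t' (CP p - u (sOf s₀ p) t')
    then Classical.choose h
    else Classical.choose (G.succ (sOf s₀ p))

/-- one step of the forcing-play construction. -/
def stepP (G : Game S) (u : S → S → ℤ) (σ₀ : List S → S) (s₀ : S)
    (p : List S × ℕ × ℤ × ℤ) : List S × ℕ × ℤ × ℤ :=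
  (p.1 ++ [nextP G u σ₀ s₀ p], KP G u s₀ p - 1,
    CP p - u (sOf s₀ p) (nextP G u σ₀ s₀ p), p.2.2.2 + u (sOf s₀ p) (nextP G u σ₀ s₀ p))

def auxP (G : Game S) (u : S → S → ℤ) (σ₀ : List S → S) (s₀ : S) (n : ℕ) :
    List S × ℕ × ℤ × ℤ :=
  (stepP G u σ₀ s₀)^[n] ([s₀], 0, -1, 0)

def playP (G : Game S) (u : S → S → ℤ) (σ₀ : List S → S) (s₀ : S) (n : ℕ) : S :=
  (auxP G u σ₀ s₀ n).1.getLastD s₀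

lemma auxP_succ (G : Game S) (u : S → S → ℤ) (σ₀ : List S → S) (s₀ : S) (n : ℕ) :
    auxP G u σ₀ s₀ (n + 1) = stepP G u σ₀ s₀ (auxP G u σ₀ s₀ n) := by
  unfold auxP
  rw [Function.iterate_succ_apply']

section fin4
variable [Fintype S] (G : Game S) (u : S → S → ℤ) (σ₀ : List S → S) (s₀ : S)

set_option linter.unusedSectionVars false

/-- the invariant of the forcing-play construction. -/
def InvP (n : ℕ) : Prop :=
  (auxP G u σ₀ s₀ n).1 = hist (playP G u σ₀ s₀) n
  ∧ fstar G u (playP G u σ₀ s₀ n) = ⊤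
  ∧ List.Chain' G.E (hist (playP G u σ₀ s₀) n)
  ∧ (auxP G u σ₀ s₀ n).2.2.2 = ELu u (playP G u σ₀ s₀) n
  ∧ (0 ≤ (auxP G u σ₀ s₀ n).2.2.1 →
      Force G u (auxP G u σ₀ s₀ n).2.1 (playP G u σ₀ s₀ n) (auxP G u σ₀ s₀ n).2.2.1
      ∧ 1 ≤ (auxP G u σ₀ s₀ n).2.2.1 + (auxP G u σ₀ s₀ n).2.2.2)
  ∧ (1 ≤ n → 1 ≤ (auxP G u σ₀ s₀ n).2.2.1 + (auxP G u σ₀ s₀ n).2.2.2)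

lemma step_main (hσ : IsStrat1 G σ₀) (n : ℕ) (hI : InvP G u σ₀ s₀ n) :
    InvP G u σ₀ s₀ (n + 1)
    ∧ G.E (playP G u σ₀ s₀ n) (playP G u σ₀ s₀ (n + 1))
    ∧ (G.p1 (playP G u σ₀ s₀ n) →
        playP G u σ₀ s₀ (n + 1) = σ₀ (hist (playP G u σ₀ s₀) n))
    ∧ (0 ≤ (auxP G u σ₀ s₀ n).2.2.1 → 0 ≤ (auxP G u σ₀ s₀ (n + 1)).2.2.1 →
        (auxP G u σ₀ s₀ (n + 1)).2.1 < (auxP G u σ₀ s₀ n).2.1) := by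
  obtain ⟨hρ, htop, hchain, he, hforce, hsum1⟩ := hI
  have hsOf : sOf s₀ (auxP G u σ₀ s₀ n) = playP G u σ₀ s₀ n := rfl
  -- normalization facts
  have hC0 : 0 ≤ CP (auxP G u σ₀ s₀ n) := by
    unfold CP
    split
    · exact le_trans one_pos.le (le_max_right _ _)
    · omega
  have hFK : Force G u (KP G u s₀ (auxP G u σ₀ s₀ n)) (playP G u σ₀ s₀ n)
      (CP (auxP G u σ₀ s₀ n)) := by
    unfold KP CP
    by_cases hc : (auxP G u σ₀ s₀ n).2.2.1 < 0
    · rw [if_pos hc, if_pos hc]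
      have hex : ∃ k', (((max (1 - (auxP G u σ₀ s₀ n).2.2.2) 1).toNat : ℕ∞))
          < iterL G u k' (sOf s₀ (auxP G u σ₀ s₀ n)) :=
        exists_iter_gt G u htop _
      rw [dif_pos hex]
      have hspec := Classical.choose_spec hex
      exact force_of_lt_iter G u _ _ _
        (le_trans zero_le_one (le_max_right _ _)) hspec
    · rw [if_neg hc, if_neg hc]
      exact (hforce (by omega)).1
  have hsum : 1 ≤ CP (auxP G u σ₀ s₀ n) + (auxP G u σ₀ s₀ n).2.2.2 := by
    unfold CP
    by_cases hc : (auxP G u σ₀ s₀ n).2.2.1 < 0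
    · rw [if_pos hc]
      have h1 := le_max_left (1 - (auxP G u σ₀ s₀ n).2.2.2) 1
      omega
    · rw [if_neg hc]
      exact (hforce (by omega)).2
  obtain ⟨K', hK'⟩ := force_pos_k G u hFK hC0
  -- step equations
  have hnext_eq : playP G u σ₀ s₀ (n + 1) = nextP G u σ₀ s₀ (auxP G u σ₀ s₀ n) := by
    unfold playP
    rw [auxP_succ]
    exact List.getLastD_concat
  have hlist_eq : (auxP G u σ₀ s₀ (n + 1)).1
      = (auxP G u σ₀ s₀ n).1 ++ [nextP G u σ₀ s₀ (auxP G u σ₀ s₀ n)] := by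
    rw [auxP_succ]; rfl
  have hk_eq : (auxP G u σ₀ s₀ (n + 1)).2.1 = KP G u s₀ (auxP G u σ₀ s₀ n) - 1 := by
    rw [auxP_succ]; rfl
  have hc_eq : (auxP G u σ₀ s₀ (n + 1)).2.2.1
      = CP (auxP G u σ₀ s₀ n)
        - u (playP G u σ₀ s₀ n) (playP G u σ₀ s₀ (n + 1)) := by
    rw [auxP_succ, hnext_eq]; rfl
  have he_eq : (auxP G u σ₀ s₀ (n + 1)).2.2.2
      = (auxP G u σ₀ s₀ n).2.2.2
        + u (playP G u σ₀ s₀ n) (playP G u σ₀ s₀ (n + 1)) := by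
    rw [auxP_succ, hnext_eq]; rfl
  -- the next state: edge, top, force
  have hmain : G.E (playP G u σ₀ s₀ n) (playP G u σ₀ s₀ (n + 1))
      ∧ fstar G u (playP G u σ₀ s₀ (n + 1)) = ⊤
      ∧ Force G u K' (playP G u σ₀ s₀ (n + 1))
          (CP (auxP G u σ₀ s₀ n) - u (playP G u σ₀ s₀ n) (playP G u σ₀ s₀ (n + 1)))
      ∧ (G.p1 (playP G u σ₀ s₀ n) →
          playP G u σ₀ s₀ (n + 1) = σ₀ (hist (playP G u σ₀ s₀) n)) := by
    rw [hK'] at hFK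
    rw [show Force G u (K' + 1) (playP G u σ₀ s₀ n) (CP (auxP G u σ₀ s₀ n))
        = (CP (auxP G u σ₀ s₀ n) < 0 ∨
          ((G.p1 (playP G u σ₀ s₀ n) ∧ ∀ t, G.E (playP G u σ₀ s₀ n) t →
            Force G u K' t (CP (auxP G u σ₀ s₀ n) - u (playP G u σ₀ s₀ n) t)) ∨
           (¬ G.p1 (playP G u σ₀ s₀ n) ∧ ∃ t, G.E (playP G u σ₀ s₀ n) t ∧
            fstar G u t = ⊤ ∧
            Force G u K' t (CP (auxP G u σ₀ s₀ n) - u (playP G u σ₀ s₀ n) t))))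
      from rfl] at hFK
    rcases hFK with hneg | hbr
    · omega
    by_cases hp : G.p1 (playP G u σ₀ s₀ n)
    · have hForceAll : ∀ t, G.E (playP G u σ₀ s₀ n) t →
          Force G u K' t (CP (auxP G u σ₀ s₀ n) - u (playP G u σ₀ s₀ n) t) := by
        rcases hbr with ⟨_, h⟩ | ⟨hnp, _⟩
        · exact h
        · exact absurd hp hnp
      have hnv : nextP G u σ₀ s₀ (auxP G u σ₀ s₀ n) = σ₀ (auxP G u σ₀ s₀ n).1 := by
        unfold nextP
        rw [if_pos (show G.p1 (sOf s₀ (auxP G u σ₀ s₀ n)) from hp)]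
      have hconsist : playP G u σ₀ s₀ (n + 1) = σ₀ (hist (playP G u σ₀ s₀) n) := by
        rw [hnext_eq, hnv, hρ]
      have hedge : G.E (playP G u σ₀ s₀ n) (playP G u σ₀ s₀ (n + 1)) := by
        rw [hconsist]
        have := hσ (hist (playP G u σ₀ s₀) n) (hist_ne_nil _ n) hchain
          (by rw [hist_getLast]; exact hp)
        rw [hist_getLast] at this
        exact this
      exact ⟨hedge, fstar_p1_top G u hp htop _ hedge,
        hForceAll _ hedge, fun _ => hconsist⟩
    · have hexists : ∃ t, G.E (playP G u σ₀ s₀ n) t ∧ fstar G u t = ⊤ ∧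
          Force G u K' t (CP (auxP G u σ₀ s₀ n) - u (playP G u σ₀ s₀ n) t) := by
        rcases hbr with ⟨hp', _⟩ | ⟨_, h⟩
        · exact absurd hp' hp
        · exact h
      have hexists' : ∃ t', G.E (sOf s₀ (auxP G u σ₀ s₀ n)) t' ∧ fstar G u t' = ⊤ ∧
          Force G u (KP G u s₀ (auxP G u σ₀ s₀ n) - 1) t'
            (CP (auxP G u σ₀ s₀ n) - u (sOf s₀ (auxP G u σ₀ s₀ n)) t') := by
        rw [hsOf, hK']
        simpa using hexists
      have hnv : nextP G u σ₀ s₀ (auxP G u σ₀ s₀ n) = Classical.choose hexists' := by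
        unfold nextP
        rw [if_neg (show ¬ G.p1 (sOf s₀ (auxP G u σ₀ s₀ n)) from hp), dif_pos hexists']
      have hspec := Classical.choose_spec hexists'
      have hKK : K' = KP G u s₀ (auxP G u σ₀ s₀ n) - 1 := by omega
      rw [hnext_eq, hnv, hKK]
      exact ⟨hspec.1, hspec.2.1, hspec.2.2, fun h1 => absurd h1 hp⟩
  obtain ⟨hedge, htopnext, hforcenext, hcons⟩ := hmain
  have hInv1 : InvP G u σ₀ s₀ (n + 1) := by
    refine ⟨?_, htopnext, ?_, ?_, ?_, ?_⟩
    · rw [hlist_eq, hρ, ← hnext_eq, ← hist_succ]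
    · rw [hist_succ]
      exact chain'_snoc hchain (hist_ne_nil _ n) s₀ (by rw [hist_getLastD]; exact hedge)
    · rw [he_eq, he, ← ELu_succ]
    · intro _
      constructor
      · rw [hk_eq, hK', Nat.add_sub_cancel, hc_eq]
        exact hforcenext
      · rw [hc_eq, he_eq]
        have := hsum
        omega
    · intro _
      rw [hc_eq, he_eq]
      omega
  refine ⟨hInv1, hedge, hcons, ?_⟩
  intro hc0 _
  have hKPn : KP G u s₀ (auxP G u σ₀ s₀ n) = (auxP G u σ₀ s₀ n).2.1 := by
    unfold KP
    rw [if_neg (by omega)]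
  rw [hk_eq, hKPn]
  have hk1 : 1 ≤ (auxP G u σ₀ s₀ n).2.1 := by
    rw [← hKPn, hK']
    omega
  omega

end fin4

section fin5
variable [Fintype S] (G : Game S) (u : S → S → ℤ) (σ₀ : List S → S) (s₀ : S)

set_option linter.unusedSectionVars false

lemma inv_all (hσ : IsStrat1 G σ₀) (h0 : fstar G u s₀ = ⊤) : ∀ n, InvP G u σ₀ s₀ n := by
  intro n
  induction n with
  | zero =>
    refine ⟨rfl, h0, List.isChain_singleton _, rfl, ?_, ?_⟩
    · intro h
      exact absurd h (by norm_num [auxP])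
    · intro h
      exact absurd h (by norm_num)
  | succ m ih => exact (step_main G u σ₀ s₀ hσ m ih).1

/-- in the `⊤`-region case, player 2 can produce a play consistent with `σ₀` whose
`u`-energy exceeds `1` infinitely often. -/
lemma top_case (hσ : IsStrat1 G σ₀) (h0 : fstar G u s₀ = ⊤) :
    ∃ π : ℕ → S, IsPlay G s₀ π ∧ Consistent1 G σ₀ π ∧
      ∀ N : ℕ, ∃ n, N < n ∧ 1 ≤ ELu u π n := by
  have hinv := inv_all G u σ₀ s₀ hσ h0
  have hstep := fun n => step_main G u σ₀ s₀ hσ n (hinv n)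
  refine ⟨playP G u σ₀ s₀, ⟨rfl, fun n => (hstep n).2.1⟩, fun n hp => (hstep n).2.2.1 hp, ?_⟩
  -- c becomes negative infinitely often
  have hdec : ∀ j n, 0 ≤ (auxP G u σ₀ s₀ n).2.2.1 → (auxP G u σ₀ s₀ n).2.1 ≤ j →
      ∃ m, n < m ∧ (auxP G u σ₀ s₀ m).2.2.1 < 0 := by
    intro j
    induction j with
    | zero =>
      intro n hc hk
      by_cases hc1 : (auxP G u σ₀ s₀ (n+1)).2.2.1 < 0
      · exact ⟨n+1, Nat.lt_succ_self n, hc1⟩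
      · have := (hstep n).2.2.2 hc (by omega)
        omega
    | succ j ih =>
      intro n hc hk
      by_cases hc1 : (auxP G u σ₀ s₀ (n+1)).2.2.1 < 0
      · exact ⟨n+1, Nat.lt_succ_self n, hc1⟩
      · have hlt := (hstep n).2.2.2 hc (by omega)
        obtain ⟨m, hm, hcm⟩ := ih (n+1) (by omega) (by omega)
        exact ⟨m, by omega, hcm⟩
  have hfreq : ∀ N : ℕ, ∃ n, N < n ∧ (auxP G u σ₀ s₀ n).2.2.1 < 0 := by
    intro N
    by_cases hc1 : (auxP G u σ₀ s₀ (N+1)).2.2.1 < 0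
    · exact ⟨N+1, Nat.lt_succ_self N, hc1⟩
    · obtain ⟨m, hm, hcm⟩ := hdec (auxP G u σ₀ s₀ (N+1)).2.1 (N+1) (by omega) (le_refl _)
      exact ⟨m, by omega, hcm⟩
  intro N
  obtain ⟨n, hn, hcn⟩ := hfreq N
  refine ⟨n, hn, ?_⟩
  obtain ⟨_, _, _, he, _, hsum1⟩ := hinv n
  have h1 : 1 ≤ (auxP G u σ₀ s₀ n).2.2.1 + (auxP G u σ₀ s₀ n).2.2.2 := hsum1 (by omega)
  rw [he] at h1
  omega

end fin5

section fin6
variable [Fintype S] (G : Game S) (u : S → S → ℤ) (s₀ : S)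

set_option linter.unusedSectionVars false

/-- the memoryless choice function. -/
def sel : S → S := fun s =>
  if h : G.p1 s ∧ fstar G u s ≠ ⊤ then Classical.choose (fstar_p1_fin G u h.1 h.2)
  else Classical.choose (G.succ s)

lemma sel_edge : ∀ s, G.E s (sel G u s) := by
  intro s
  unfold sel
  split
  case isTrue h => exact (Classical.choose_spec (fstar_p1_fin G u h.1 h.2)).1
  case isFalse h => exact Classical.choose_spec (G.succ s)

lemma sel_good {s : S} (hp : G.p1 s) (hs : fstar G u s ≠ ⊤) :
    fstar G u (sel G u s) ≠ ⊤ ∧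
      ((fstar G u (sel G u s)).toNat : ℤ) + u s (sel G u s) ≤ ((fstar G u s).toNat : ℤ) := by
  unfold sel
  rw [dif_pos (⟨hp, hs⟩ : G.p1 s ∧ fstar G u s ≠ ⊤)]
  exact ⟨(Classical.choose_spec (fstar_p1_fin G u hp hs)).2.1,
    (Classical.choose_spec (fstar_p1_fin G u hp hs)).2.2⟩

/-- the memoryless strategy. -/
def selStrat : List S → S := fun ρ => sel G u (ρ.getLastD s₀)

lemma selStrat_isStrat : IsStrat1 G (selStrat G u s₀) := by
  intro ρ hne hch hp
  unfold selStrat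
  rw [getLastD_eq_getLast ρ hne s₀]
  exact sel_edge G u _

lemma selStrat_memoryless : Memoryless (selStrat G u s₀) := by
  intro ρ ρ' h h' heq
  unfold selStrat
  rw [getLastD_eq_getLast ρ h s₀, getLastD_eq_getLast ρ' h' s₀, heq]

lemma selStrat_bound (hT : fstar G u s₀ ≠ ⊤) (π : ℕ → S) (hplay : IsPlay G s₀ π)
    (hcons : Consistent1 G (selStrat G u s₀) π) :
    ∀ n, fstar G u (π n) ≠ ⊤ ∧
      ((fstar G u (π n)).toNat : ℤ) + ELu u π n ≤ ((fstar G u s₀).toNat : ℤ) := by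
  intro n
  induction n with
  | zero =>
    constructor
    · rw [hplay.1]; exact hT
    · rw [hplay.1, ELu_zero]; omega
  | succ m ih =>
    by_cases hp : G.p1 (π m)
    · have hnext : π (m + 1) = sel G u (π m) := by
        rw [hcons m hp]
        unfold selStrat
        rw [hist_getLastD]
      obtain ⟨hne, hle⟩ := sel_good G u hp ih.1
      rw [← hnext] at hne hle
      refine ⟨hne, ?_⟩
      rw [ELu_succ]
      omega
    · obtain ⟨hne, hle⟩ := fstar_p2_fin G u hp ih.1 (π (m + 1)) (hplay.2 m)
      refine ⟨hne, ?_⟩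
      rw [ELu_succ]
      omega

end fin6

/-! ### analytic lemmas -/

lemma sum_range_id_real (n : ℕ) :
    ∑ i ∈ Finset.range n, ((i : ℝ) + 1) = (n : ℝ) * ((n : ℝ) + 1) / 2 := by
  induction n with
  | zero => simp
  | succ m ih =>
    rw [Finset.sum_range_succ, ih]
    push_cast
    ring

lemma tendsto_bot_of_le {x b : ℕ → ℝ} (hle : ∀ᶠ n in atTop, x n ≤ b n)
    (hb : Tendsto b atTop atBot) :
    Tendsto (fun n => ((x n : ℝ) : EReal)) atTop (nhds ⊥) := by
  rw [EReal.tendsto_nhds_bot_iff_real]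
  intro r
  filter_upwards [hle, hb.eventually_lt_atBot r] with n h1 h2
  exact_mod_cast lt_of_le_of_lt h1 h2

end MPAE

/-- If player 1 can win a mean-payoff objective with a strictly negative threshold, then he
has a memoryless strategy forcing every consistent play to have average-energy `-∞` (for both
variants); in particular this memoryless strategy wins `AvgEnergyLevel t'` for every `t' : ℚ`. -/
theorem MP_neg_implies_AE_bot {S : Type} [Fintype S] (G : Game S) (s₀ : S)
    (h : ∃ t : ℚ, t < 0 ∧ ∃ σ : List S → S, Winning1 G s₀ σ (MeanPayOff G t)) :
    ∃ σ : List S → S, IsStrat1 G σ ∧ Memoryless σ ∧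
      (∀ π, IsPlay G s₀ π → Consistent1 G σ π → AEinfP G π = ⊥ ∧ AEsupP G π = ⊥) ∧
      (∀ t' : ℚ, Winning1 G s₀ σ (AvgEnergyLevel G t')) := by
  classical
  obtain ⟨τ, hτ, σ₀, hσ₀, hwin⟩ := h
  set p : ℤ := -τ.num with hp_def
  set q : ℕ := τ.den with hq_def
  have hp : 0 < p := by
    have : τ.num < 0 := Rat.num_neg.mpr hτ
    omega
  have hq : 0 < q := τ.den_pos
  set u : S → S → ℤ := fun s t => 2 * (q : ℤ) * G.w s t + p with hu_def
  have hELu : ∀ π : ℕ → S, ∀ n, MPAE.ELu u π n = 2 * (q : ℤ) * ELp G π n + p * n := by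
    intro π n
    unfold MPAE.ELu ELp
    simp only [hu_def]
    rw [Finset.sum_add_distrib, Finset.sum_const, Finset.card_range, ← Finset.mul_sum]
    simp [mul_comm]
  have hτreal : (τ : ℝ) = -(p : ℝ) / (q : ℝ) := by
    rw [Rat.cast_def, hp_def, hq_def]
    push_cast
    ring
  have hq2 : (0:ℝ) < 2 * (q:ℝ) := by positivity
  by_cases hT : MPAE.fstar G u s₀ = ⊤
  · exfalso
    obtain ⟨π, hplay, hcons, hrec⟩ := MPAE.top_case G u σ₀ s₀ hσ₀ hT
    have hMP : MPsupP G π ≤ ((τ : ℝ) : EReal) := hwin π hplay hcons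
    have hfreq : ∃ᶠ n in atTop,
        (((τ/2 : ℝ)) : EReal) ≤ (((ELp G π n : ℝ) / (n : ℝ) : ℝ) : EReal) := by
      rw [Filter.frequently_atTop]
      intro N
      obtain ⟨n, hn, hEn⟩ := hrec N
      refine ⟨n, by omega, ?_⟩
      rw [hELu π n] at hEn
      have hn1 : (1:ℝ) ≤ (n:ℝ) := by exact_mod_cast (by omega : 1 ≤ n)
      have hn0 : (0:ℝ) < (n:ℝ) := by linarith
      rw [EReal.coe_le_coe_iff]
      have hcast : (1:ℝ) ≤ 2*(q:ℝ)*(ELp G π n : ℝ) + (p:ℝ)*(n:ℝ) := by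
        exact_mod_cast hEn
      rw [hτreal]
      rw [div_le_div_iff₀ (by norm_num : (0:ℝ) < 2) hn0]
      have hqr : (0:ℝ) < (q:ℝ) := by exact_mod_cast hq
      rw [div_mul_eq_mul_div, div_le_iff₀ hqr]
      nlinarith
    have hge : (((τ/2 : ℝ)) : EReal) ≤ MPsupP G π :=
      Filter.le_limsup_of_frequently_le hfreq
    have hle2 : (((τ/2 : ℝ)) : EReal) ≤ ((τ : ℝ) : EReal) := le_trans hge hMP
    rw [EReal.coe_le_coe_iff] at hle2
    have hτr : (τ:ℝ) < 0 := by exact_mod_cast hτ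
    linarith
  · have key : ∀ π, IsPlay G s₀ π → Consistent1 G (MPAE.selStrat G u s₀) π →
        Tendsto (fun n : ℕ =>
          (((∑ i ∈ Finset.range n, (ELp G π (i+1) : ℝ)) / n : ℝ) : EReal)) atTop (nhds ⊥) := by
      intro π hplay hcons
      have hbound := MPAE.selStrat_bound G u s₀ hT π hplay hcons
      have hEL : ∀ n, 2*(q:ℤ)*ELp G π n + p * (n:ℤ) ≤ ((MPAE.fstar G u s₀).toNat : ℤ) := by
        intro n
        have h1 := (hbound n).2
        rw [hELu π n] at h1
        have h2 : (0:ℤ) ≤ ((MPAE.fstar G u (π n)).toNat : ℤ) := Int.ofNat_nonneg _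
        omega
      have hterm : ∀ i : ℕ, (ELp G π (i+1) : ℝ) ≤
          ((MPAE.fstar G u s₀).toNat : ℝ)/(2*(q:ℝ)) - ((p:ℝ)/(2*(q:ℝ)))*((i:ℝ)+1) := by
        intro i
        have h1 := hEL (i+1)
        have hcast : 2*(q:ℝ)*(ELp G π (i+1) : ℝ) + (p:ℝ)*((i:ℝ)+1)
            ≤ ((MPAE.fstar G u s₀).toNat : ℝ) := by
          exact_mod_cast h1
        have h3 : (ELp G π (i+1) : ℝ) ≤
            (((MPAE.fstar G u s₀).toNat : ℝ) - (p:ℝ)*((i:ℝ)+1)) / (2*(q:ℝ)) := by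
          rw [le_div_iff₀ hq2]
          ring_nf
          ring_nf at hcast
          linarith
        calc (ELp G π (i+1) : ℝ)
            ≤ (((MPAE.fstar G u s₀).toNat : ℝ) - (p:ℝ)*((i:ℝ)+1)) / (2*(q:ℝ)) := h3
          _ = ((MPAE.fstar G u s₀).toNat : ℝ)/(2*(q:ℝ))
              - ((p:ℝ)/(2*(q:ℝ)))*((i:ℝ)+1) := by ring
      apply MPAE.tendsto_bot_of_le
        (b := fun n => ((MPAE.fstar G u s₀).toNat : ℝ)/(2*(q:ℝ))
          - ((p:ℝ)/(2*(q:ℝ))) * (((n:ℝ)+1)/2))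
      · rw [eventually_atTop]
        refine ⟨1, fun n hn => ?_⟩
        have hn0 : (0:ℝ) < (n:ℝ) := by exact_mod_cast hn
        have hsum : (∑ i ∈ Finset.range n, (ELp G π (i+1) : ℝ))
            ≤ ∑ i ∈ Finset.range n, (((MPAE.fstar G u s₀).toNat : ℝ)/(2*(q:ℝ))
              - ((p:ℝ)/(2*(q:ℝ)))*((i:ℝ)+1)) :=
          Finset.sum_le_sum (fun i _ => hterm i)
        have hsum2 : ∑ i ∈ Finset.range n, (((MPAE.fstar G u s₀).toNat : ℝ)/(2*(q:ℝ))
              - ((p:ℝ)/(2*(q:ℝ)))*((i:ℝ)+1))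
            = (n:ℝ) * (((MPAE.fstar G u s₀).toNat : ℝ)/(2*(q:ℝ)))
              - ((p:ℝ)/(2*(q:ℝ))) * ((n:ℝ)*((n:ℝ)+1)/2) := by
          rw [Finset.sum_sub_distrib, Finset.sum_const, Finset.card_range,
            ← Finset.mul_sum, MPAE.sum_range_id_real]
          simp [nsmul_eq_mul]
        rw [div_le_iff₀ hn0]
        calc (∑ i ∈ Finset.range n, (ELp G π (i+1) : ℝ))
            ≤ (n:ℝ) * (((MPAE.fstar G u s₀).toNat : ℝ)/(2*(q:ℝ)))
              - ((p:ℝ)/(2*(q:ℝ))) * ((n:ℝ)*((n:ℝ)+1)/2) := by rw [← hsum2]; exact hsum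
          _ = (((MPAE.fstar G u s₀).toNat : ℝ)/(2*(q:ℝ))
              - ((p:ℝ)/(2*(q:ℝ))) * (((n:ℝ)+1)/2)) * (n:ℝ) := by ring
      · have h1 : Tendsto (fun n : ℕ => ((n:ℝ)+1)) atTop atTop :=
          tendsto_atTop_add_const_right _ 1 tendsto_natCast_atTop_atTop
        have hD : (0:ℝ) < (p:ℝ)/(2*(q:ℝ)) := by
          apply div_pos _ hq2
          exact_mod_cast hp
        have h2 : Tendsto (fun n : ℕ => ((p:ℝ)/(2*(q:ℝ))) * (((n:ℝ)+1)/2)) atTop atTop := by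
          apply Filter.Tendsto.const_mul_atTop hD
          exact h1.atTop_div_const (by norm_num)
        have h3 := tendsto_neg_atTop_atBot.comp h2
        have h4 := tendsto_atBot_add_const_left atTop
          (((MPAE.fstar G u s₀).toNat : ℝ)/(2*(q:ℝ))) h3
        simpa [sub_eq_add_neg, Function.comp] using h4
    refine ⟨MPAE.selStrat G u s₀, MPAE.selStrat_isStrat G u s₀,
      MPAE.selStrat_memoryless G u s₀, ?_, ?_⟩
    · intro π hplay hcons
      exact ⟨(key π hplay hcons).liminf_eq, (key π hplay hcons).limsup_eq⟩
    · intro t'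
      refine ⟨MPAE.selStrat_isStrat G u s₀, fun π hplay hcons => ?_⟩
      show AEsupP G π ≤ _
      rw [show AEsupP G π = ⊥ from (key π hplay hcons).limsup_eq]
      exact bot_le

end
end

section
/- Let G = (S₁, S₂, E, w) be a game with initial state s₀, let W be the largest absolute weight of G, and let G' be the sign-reversed game obtained from G by replacing w with −w. The following four assertions are equivalent: (A) there exists c₀ ∈ ℕ such that player 1 has a winning strategy from s₀ for Lower(c₀) in G; (B) player 1 has a winning strategy from s₀ for MeanPayOff(0) in G'; (C) player 1 has a winning strategy from s₀ for TotalPayOff(2·(|S|−1)·W) in G'; (D) there exists t ∈ ℤ such that player 1 has a winning strategy from s₀ for TotalPayOff(t) in G'. -/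
open Filter

noncomputable section

variable {S : Type}

set_option linter.unusedSectionVars false

namespace EGP

open Finset

variable {S : Type} [Fintype S]

noncomputable def nxt (G : Game S) (s : S) : S := (G.succ s).choose

lemma nxt_spec (G : Game S) (s : S) : G.E s (nxt G s) := (G.succ s).choose_spec

noncomputable def succs (G : Game S) (s : S) : Finset S :=
  @Finset.filter _ (fun t => G.E s t) (Classical.decPred _) Finset.univ

lemma mem_succs {G : Game S} {s t : S} : t ∈ succs G s ↔ G.E s t := by
  simp [succs]

lemma succs_nonempty (G : Game S) (s : S) : (succs G s).Nonempty :=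
  ⟨nxt G s, mem_succs.2 (nxt_spec G s)⟩

open Classical in
noncomputable def iter (G : Game S) : ℕ → S → ℤ
  | 0, _ => 0
  | k+1, s =>
    if G.p1 s then
      (succs G s).inf' (succs_nonempty G s) (fun t => max 0 (iter G k t - G.w s t))
    else
      (succs G s).sup' (succs_nonempty G s) (fun t => max 0 (iter G k t - G.w s t))

lemma iter_zero (G : Game S) (s : S) : iter G 0 s = 0 := rfl

open Classical in
lemma iter_succ (G : Game S) (k : ℕ) (s : S) :
    iter G (k+1) s =
      if G.p1 s then
        (succs G s).inf' (succs_nonempty G s) (fun t => max 0 (iter G k t - G.w s t))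
      else
        (succs G s).sup' (succs_nonempty G s) (fun t => max 0 (iter G k t - G.w s t)) := by
  rfl

lemma iter_nonneg (G : Game S) (k : ℕ) (s : S) : 0 ≤ iter G k s := by
  cases k with
  | zero => simp [iter_zero]
  | succ k =>
    classical
    rw [iter_succ]
    split
    · exact Finset.le_inf' _ _ (fun t _ => le_max_left _ _)
    · obtain ⟨t, ht⟩ := succs_nonempty G s
      exact le_trans (le_max_left _ _) (Finset.le_sup' (fun t => max 0 (iter G k t - G.w s t)) ht)

lemma iter_le_succ (G : Game S) (k : ℕ) (s : S) : iter G k s ≤ iter G (k+1) s := by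
  induction k generalizing s with
  | zero => rw [iter_zero]; exact iter_nonneg G 1 s
  | succ k ih =>
    classical
    rw [iter_succ, iter_succ]
    have hmono : ∀ t ∈ succs G s, max 0 (iter G k t - G.w s t) ≤ max 0 (iter G (k+1) t - G.w s t) := by
      intro t _
      exact max_le_max le_rfl (by linarith [ih t])
    split
    · refine Finset.le_inf' _ _ (fun t ht => le_trans (Finset.inf'_le _ ht) (hmono t ht))
    · exact Finset.sup'_mono_fun hmono

lemma iter_mono (G : Game S) {k l : ℕ} (h : k ≤ l) (s : S) : iter G k s ≤ iter G l s := by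
  induction l with
  | zero => simp_all
  | succ l ih =>
    rcases Nat.lt_or_ge k (l+1) with h' | h'
    · exact le_trans (ih (Nat.lt_succ_iff.1 h')) (iter_le_succ G l s)
    · have : k = l + 1 := le_antisymm h h'
      simp [this]

/-- `s` has bounded iteration values. -/
def Bdd (G : Game S) (s : S) : Prop := ∃ C : ℤ, ∀ k, iter G k s ≤ C

lemma not_bdd_iff {G : Game S} {s : S} : ¬ Bdd G s ↔ ∀ C : ℤ, ∃ k, C < iter G k s := by
  unfold Bdd; push_neg; rfl

lemma bdd_of_p1_succ {G : Game S} {s t : S} (hp : G.p1 s) (ht : G.E s t) (hb : Bdd G t) :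
    Bdd G s := by
  obtain ⟨C, hC⟩ := hb
  refine ⟨max 0 (C - G.w s t), fun k => ?_⟩
  cases k with
  | zero => rw [iter_zero]; exact le_max_left _ _
  | succ k =>
    rw [iter_succ, if_pos hp]
    refine le_trans (Finset.inf'_le _ (mem_succs.2 ht)) ?_
    exact max_le_max le_rfl (by linarith [hC k])

lemma bdd_of_p2_succ {G : Game S} {s : S} (hp : ¬ G.p1 s)
    (h : ∀ t, G.E s t → Bdd G t) : Bdd G s := by
  classical
  choose C hC using h
  refine ⟨(succs G s).sup' (succs_nonempty G s)
    (fun t => if ht : G.E s t then max 0 (C t ht - G.w s t) else 0), fun k => ?_⟩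
  cases k with
  | zero =>
    rw [iter_zero]
    obtain ⟨t, ht⟩ := succs_nonempty G s
    refine le_trans ?_ (Finset.le_sup' _ ht)
    rw [dif_pos (mem_succs.1 ht)]
    exact le_max_left _ _
  | succ k =>
    rw [iter_succ, if_neg hp]
    refine Finset.sup'_mono_fun (fun t ht => ?_)
    rw [dif_pos (mem_succs.1 ht)]
    exact max_le_max le_rfl (by linarith [hC t (mem_succs.1 ht) k])

end EGP
namespace EGP

variable {S : Type} [Fintype S]

/-- A certificate for player 1: a bounded-below potential on a region `D`. -/
def CertP1 (G : Game S) (g : S → ℤ) (D : S → Prop) : Prop :=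
  ∀ s, D s → 0 ≤ g s ∧
    (G.p1 s → ∃ t, D t ∧ G.E s t ∧ g t ≤ g s + G.w s t) ∧
    (¬ G.p1 s → ∀ t, G.E s t → D t ∧ g t ≤ g s + G.w s t)

/-- A certificate for player 2. -/
def CertP2 (G : Game S) (ψ : S → ℤ) (D : S → Prop) : Prop :=
  ∀ s, D s →
    (G.p1 s → ∀ t, G.E s t → D t ∧ ψ s + G.w s t ≤ ψ t) ∧
    (¬ G.p1 s → ∃ t, D t ∧ G.E s t ∧ ψ s + G.w s t ≤ ψ t)

/-- a monotone bounded integer sequence is eventually constant -/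
lemma eventually_const {u : ℕ → ℤ} (mono : ∀ {k l : ℕ}, k ≤ l → u k ≤ u l)
    {C : ℤ} (hC : ∀ k, u k ≤ C) : ∃ K, ∀ k, K ≤ k → u k = u K := by
  obtain ⟨M, ⟨⟨K, hK⟩, hMax⟩⟩ := Int.exists_greatest_of_bdd
    (P := fun z => ∃ k, u k = z) ⟨C, by rintro z ⟨k, rfl⟩; exact hC k⟩ ⟨u 0, 0, rfl⟩
  exact ⟨K, fun k hk => by
    have h1 : u k ≤ M := hMax (u k) ⟨k, rfl⟩
    have h2 : u K ≤ u k := mono hk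
    omega⟩

lemma exists_stab (G : Game S) :
    ∃ K₁ : ℕ, ∀ s, Bdd G s → ∀ k, K₁ ≤ k → iter G k s = iter G K₁ s := by
  classical
  have h : ∀ s : S, ∃ K, Bdd G s → ∀ k, K ≤ k → iter G k s = iter G K s := by
    intro s
    by_cases hb : Bdd G s
    · obtain ⟨C, hC⟩ := hb
      obtain ⟨K, hK⟩ := eventually_const (u := fun k => iter G k s)
        (fun h => iter_mono G h s) hC
      exact ⟨K, fun _ => hK⟩
    · exact ⟨0, fun h => absurd h hb⟩
  choose K hK using h
  refine ⟨Finset.univ.sup K, fun s hb k hk => ?_⟩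
  have hs : K s ≤ Finset.univ.sup K := Finset.le_sup (Finset.mem_univ s)
  rw [hK s hb k (le_trans hs hk), hK s hb _ hs]

lemma exists_big (G : Game S) (K₀ : ℕ) (C : ℤ) :
    ∃ K₂ : ℕ, K₀ ≤ K₂ ∧ ∀ s, ¬ Bdd G s → C < iter G K₂ s := by
  classical
  have h : ∀ s : S, ∃ K, ¬ Bdd G s → C < iter G K s := by
    intro s
    by_cases hb : Bdd G s
    · exact ⟨0, fun h => absurd hb h⟩
    · obtain ⟨k, hk⟩ := not_bdd_iff.1 hb C
      exact ⟨k, fun _ => hk⟩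
  choose K hK using h
  refine ⟨max K₀ (Finset.univ.sup K), le_max_left _ _, fun s hb => ?_⟩
  refine lt_of_lt_of_le (hK s hb) (iter_mono G ?_ s)
  exact le_trans (Finset.le_sup (Finset.mem_univ s)) (le_max_right _ _)

lemma exists_certP1 (G : Game S) (Wb : ℤ)
    (hwb : ∀ s t, G.E s t → |G.w s t| ≤ Wb) :
    ∃ g : S → ℤ, ∃ Cg : ℤ, 0 ≤ Cg ∧ (∀ s, Bdd G s → g s ≤ Cg) ∧
      CertP1 G g (Bdd G) := by
  classical
  obtain ⟨K₁, hK₁⟩ := exists_stab G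
  set CgN : ℕ := Finset.univ.sup (fun s => if Bdd G s then (iter G K₁ s).toNat else 0) with hCgN
  set Cg : ℤ := (CgN : ℤ) with hCgdef
  have hCg0 : (0:ℤ) ≤ Cg := Int.ofNat_nonneg _
  have hCgle : ∀ s, Bdd G s → iter G K₁ s ≤ (Cg:ℤ) := by
    intro s hb
    have h1 : (if Bdd G s then (iter G K₁ s).toNat else 0) ≤ CgN :=
      Finset.le_sup (f := fun s => if Bdd G s then (iter G K₁ s).toNat else 0)
        (Finset.mem_univ s)
    rw [if_pos hb] at h1
    calc iter G K₁ s ≤ ((iter G K₁ s).toNat : ℤ) := Int.self_le_toNat _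
    _ ≤ Cg := Int.ofNat_le.2 h1
  obtain ⟨K₂, hK₁₂, hK₂⟩ := exists_big G K₁ ((Cg:ℤ) + Wb)
  set g : S → ℤ := iter G K₂ with hg
  have hstab : ∀ s, Bdd G s → g s = iter G K₁ s := fun s hb => hK₁ s hb K₂ hK₁₂
  have hgle : ∀ s, Bdd G s → g s ≤ (Cg:ℤ) := fun s hb => (hstab s hb) ▸ hCgle s hb
  have hstab' : ∀ s, Bdd G s → iter G (K₂+1) s = g s := by
    intro s hb
    rw [hK₁ s hb (K₂+1) (le_trans hK₁₂ (Nat.le_succ _)), hstab s hb]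
  refine ⟨g, Cg, hCg0, hgle, fun s hb => ⟨iter_nonneg G K₂ s, ?_, ?_⟩⟩
  · -- p1 case
    intro hp
    have heq : iter G (K₂+1) s = (succs G s).inf' (succs_nonempty G s)
        (fun t => max 0 (iter G K₂ t - G.w s t)) := by rw [iter_succ, if_pos hp]
    obtain ⟨t₀, ht₀m, ht₀⟩ := Finset.exists_mem_eq_inf' (succs_nonempty G s)
      (fun t => max 0 (iter G K₂ t - G.w s t))
    have hE : G.E s t₀ := mem_succs.1 ht₀m
    have hval : max 0 (iter G K₂ t₀ - G.w s t₀) = g s := by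
      rw [← ht₀, ← heq, hstab' s hb]
    have hb₀ : Bdd G t₀ := by
      by_contra hnb
      have h1 : (Cg:ℤ) + Wb < iter G K₂ t₀ := hK₂ t₀ hnb
      have h2 : iter G K₂ t₀ - G.w s t₀ ≤ g s := by
        rw [← hval]; exact le_max_right _ _
      have h3 : g s ≤ Cg := hgle s hb
      have h4 : G.w s t₀ ≤ Wb := le_trans (le_abs_self _) (hwb s t₀ hE)
      omega
    refine ⟨t₀, hb₀, hE, ?_⟩
    have h2 : iter G K₂ t₀ - G.w s t₀ ≤ g s := by
      rw [← hval]; exact le_max_right _ _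
    have hgt : g t₀ = iter G K₂ t₀ := rfl
    omega
  · -- p2 case
    intro hp t hE
    have heq : iter G (K₂+1) s = (succs G s).sup' (succs_nonempty G s)
        (fun t => max 0 (iter G K₂ t - G.w s t)) := by rw [iter_succ, if_neg hp]
    have hle : max 0 (iter G K₂ t - G.w s t) ≤ g s := by
      rw [← hstab' s hb, heq]
      exact Finset.le_sup' (fun t => max 0 (iter G K₂ t - G.w s t)) (mem_succs.2 hE)
    have h2 : iter G K₂ t - G.w s t ≤ g s := le_trans (le_max_right _ _) hle
    have hbt : Bdd G t := by
      by_contra hnb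
      have h1 : (Cg:ℤ) + Wb < iter G K₂ t := hK₂ t hnb
      have h3 : g s ≤ Cg := hgle s hb
      have h4 : G.w s t ≤ Wb := le_trans (le_abs_self _) (hwb s t hE)
      omega
    have hgt : g t = iter G K₂ t := rfl
    exact ⟨hbt, by omega⟩

end EGP
namespace EGP

variable {S : Type} [Fintype S]

/-- The subgame where player 2, on unbounded states, only uses edges to unbounded states. -/
noncomputable def subg (G : Game S) : Game S where
  p1 := G.p1
  E := fun s t => G.E s t ∧ (¬ Bdd G s → ¬ G.p1 s → ¬ Bdd G t)
  w := G.w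
  succ := by
    intro s
    by_cases hb : Bdd G s
    · exact ⟨nxt G s, nxt_spec G s, fun h => absurd hb h⟩
    · by_cases hp : G.p1 s
      · exact ⟨nxt G s, nxt_spec G s, fun _ h => absurd hp h⟩
      · by_contra hall
        push_neg at hall
        exact hb (bdd_of_p2_succ hp (fun t ht => by
          by_contra hnb
          exact hnb (hall t ht).2.2))

lemma subg_E {G : Game S} {s t : S} (h : (subg G).E s t) : G.E s t := h.1

lemma subg_E_of_p1 {G : Game S} {s t : S} (hp : G.p1 s) (h : G.E s t) : (subg G).E s t :=
  ⟨h, fun _ h' => absurd hp h'⟩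

lemma subg_E_of_bdd {G : Game S} {s t : S} (hb : Bdd G s) (h : G.E s t) : (subg G).E s t :=
  ⟨h, fun h' => absurd hb h'⟩

/-- Key emptiness lemma: unbounded states of `G` are also unbounded in the subgame. -/
lemma subg_unbdd (G : Game S) (Wb : ℤ) (hwb : ∀ s t, G.E s t → |G.w s t| ≤ Wb)
    {s1 : S} (h1 : ¬ Bdd G s1) : ¬ Bdd (subg G) s1 := by
  classical
  intro hbar
  obtain ⟨g, Cg, hCg0, hgle, hcert⟩ := exists_certP1 G Wb hwb
  obtain ⟨gb, Cgb, hCgb0, hgble, hcertb⟩ := exists_certP1 (subg G) Wb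
    (fun s t ht => hwb s t (subg_E ht))
  set Δ : ℤ := Cg + Wb + 1 with hΔ
  have hΔ0 : 0 ≤ Δ := by
    have : 0 ≤ Wb := le_trans (abs_nonneg _) (hwb s1 (nxt G s1) (nxt_spec G s1))
    omega
  set φ : S → ℤ := fun s => if Bdd G s then g s else gb s + Δ with hφ
  have main : ∀ k s, (Bdd G s ∨ Bdd (subg G) s) → iter G k s ≤ φ s := by
    intro k
    induction k with
    | zero =>
      intro s hs
      rw [iter_zero]
      by_cases hbs : Bdd G s
      · rw [show φ s = g s from if_pos hbs]; exact (hcert s hbs).1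
      · rw [show φ s = gb s + Δ from if_neg hbs]
        have hbb : Bdd (subg G) s := hs.resolve_left hbs
        have := (hcertb s hbb).1
        omega
    | succ k ih =>
      intro s hs
      rcases hs with hb | hbar'
      · -- s bounded in G
        obtain ⟨hg0, hp1c, hp2c⟩ := hcert s hb
        have hφs : φ s = g s := if_pos hb
        by_cases hp : G.p1 s
        · obtain ⟨t, htb, htE, htle⟩ := hp1c hp
          rw [iter_succ, if_pos hp, hφs]
          refine le_trans (Finset.inf'_le _ (mem_succs.2 htE)) ?_
          have hik : iter G k t ≤ φ t := ih t (Or.inl htb)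
          have hφt : φ t = g t := if_pos htb
          rw [hφt] at hik
          exact max_le (by omega) (by omega)
        · rw [iter_succ, if_neg hp, hφs]
          refine Finset.sup'_le _ _ (fun t htm => ?_)
          have htE := mem_succs.1 htm
          obtain ⟨htb, htle⟩ := hp2c hp t htE
          have hik : iter G k t ≤ φ t := ih t (Or.inl htb)
          have hφt : φ t = g t := if_pos htb
          rw [hφt] at hik
          exact max_le (by omega) (by omega)
      · by_cases hb : Bdd G s
        · -- already covered
          exact (by
            obtain ⟨hg0, hp1c, hp2c⟩ := hcert s hb
            have hφs : φ s = g s := if_pos hb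
            by_cases hp : G.p1 s
            · obtain ⟨t, htb, htE, htle⟩ := hp1c hp
              rw [iter_succ, if_pos hp, hφs]
              refine le_trans (Finset.inf'_le _ (mem_succs.2 htE)) ?_
              have hik : iter G k t ≤ φ t := ih t (Or.inl htb)
              have hφt : φ t = g t := if_pos htb
              rw [hφt] at hik
              exact max_le (by omega) (by omega)
            · rw [iter_succ, if_neg hp, hφs]
              refine Finset.sup'_le _ _ (fun t htm => ?_)
              have htE := mem_succs.1 htm
              obtain ⟨htb, htle⟩ := hp2c hp t htE
              have hik : iter G k t ≤ φ t := ih t (Or.inl htb)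
              have hφt : φ t = g t := if_pos htb
              rw [hφt] at hik
              exact max_le (by omega) (by omega))
        · -- s unbounded in G, bounded in subgame
          obtain ⟨hgb0, hp1c, hp2c⟩ := hcertb s hbar'
          have hφs : φ s = gb s + Δ := if_neg hb
          -- generic bound for any target t with the two cases
          have key : ∀ t, G.E s t → iter G k t ≤ φ t →
              ((¬ Bdd G t → gb t ≤ gb s + G.w s t) → max 0 (iter G k t - G.w s t) ≤ gb s + Δ) := by
            intro t htE hik hgbt
            have hwle : |G.w s t| ≤ Wb := hwb s t htE
            obtain ⟨hwL, hwR⟩ := abs_le.mp hwle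
            by_cases hbt : Bdd G t
            · have hφt : φ t = g t := if_pos hbt
              have hik' : iter G k t ≤ g t := hφt ▸ hik
              have h5 := hgle t hbt
              exact max_le (by omega) (by omega)
            · have hφt : φ t = gb t + Δ := if_neg hbt
              have hik' : iter G k t ≤ gb t + Δ := hφt ▸ hik
              have h6 := hgbt hbt
              exact max_le (by omega) (by omega)
          by_cases hp : G.p1 s
          · obtain ⟨t, htb, htE', htle⟩ := hp1c hp
            have htE : G.E s t := subg_E htE'
            rw [iter_succ, if_pos hp, hφs]
            refine le_trans (Finset.inf'_le _ (mem_succs.2 htE)) ?_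
            exact key t htE (ih t (Or.inr htb)) (fun _ => htle)
          · rw [iter_succ, if_neg hp, hφs]
            refine Finset.sup'_le _ _ (fun t htm => ?_)
            have htE := mem_succs.1 htm
            by_cases hbt : Bdd G t
            · -- use g-certificate side
              have hik : iter G k t ≤ φ t := ih t (Or.inl hbt)
              exact key t htE hik (fun hc => absurd hbt hc)
            · have htE' : (subg G).E s t := ⟨htE, fun _ _ => hbt⟩
              obtain ⟨htb, htle⟩ := hp2c hp t htE'
              exact key t htE (ih t (Or.inr htb)) (fun _ => htle)
  exact h1 ⟨φ s1, fun k => main k s1 (Or.inr hbar)⟩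

/-- The dichotomy: either player 1 has a P1-certificate at `s₀`, or player 2 has a
P2-certificate at `s₀`. -/
lemma dichotomy (G : Game S) (Wb : ℤ) (hwb : ∀ s t, G.E s t → |G.w s t| ≤ Wb) (s₀ : S) :
    (∃ g : S → ℤ, CertP1 G g (Bdd G) ∧ Bdd G s₀) ∨
    (∃ ψ : S → ℤ, CertP2 G ψ (fun s => ¬ Bdd G s) ∧ ¬ Bdd G s₀) := by
  classical
  by_cases hb : Bdd G s₀
  · obtain ⟨g, Cg, _, _, hcert⟩ := exists_certP1 G Wb hwb
    exact Or.inl ⟨g, hcert, hb⟩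
  · right
    -- choose K₃ with all unbounded states having subgame-iteration value ≥ 1
    have hdiv : ∀ s : S, ∃ K, ¬ Bdd G s → 1 ≤ iter (subg G) K s := by
      intro s
      by_cases hbs : Bdd G s
      · exact ⟨0, fun h => absurd hbs h⟩
      · obtain ⟨k, hk⟩ := not_bdd_iff.1 (subg_unbdd G Wb hwb hbs) 0
        exact ⟨k, fun _ => hk⟩
    choose K hKd using hdiv
    set K₃ : ℕ := Finset.univ.sup K with hK₃
    have hK₃big : ∀ s, ¬ Bdd G s → 1 ≤ iter (subg G) K₃ s := by
      intro s hs
      exact le_trans (hKd s hs) (iter_mono _ (Finset.le_sup (Finset.mem_univ s)) s)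
    set ψ : S → ℤ := iter (subg G) K₃ with hψ
    have hψmono : ∀ s, ψ s ≤ iter (subg G) (K₃+1) s := fun s => iter_le_succ _ _ _
    refine ⟨ψ, fun s hs => ⟨?_, ?_⟩, hb⟩
    · -- p1 states: all successors
      intro hp t htE
      have htA : ¬ Bdd G t := fun hbt => hs (bdd_of_p1_succ hp htE hbt)
      refine ⟨htA, ?_⟩
      have h1 : 1 ≤ ψ s := hK₃big s hs
      have h2 : iter (subg G) (K₃+1) s ≤ max 0 (iter (subg G) K₃ t - (subg G).w s t) := by
        rw [iter_succ, if_pos (show (subg G).p1 s from hp)]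
        exact Finset.inf'_le _ (mem_succs.2 (subg_E_of_p1 hp htE))
      have h3 : ψ s ≤ max 0 (ψ t - G.w s t) := le_trans (hψmono s) h2
      have h4 : ψ s ≤ ψ t - G.w s t := by
        rcases max_cases 0 (ψ t - G.w s t) with ⟨heq, _⟩ | ⟨heq, _⟩ <;> omega
      omega
    · -- p2 states: some successor
      intro hp
      have h2 : iter (subg G) (K₃+1) s = (succs (subg G) s).sup' (succs_nonempty _ s)
          (fun t => max 0 (iter (subg G) K₃ t - (subg G).w s t)) := by
        rw [iter_succ, if_neg (show ¬ (subg G).p1 s from hp)]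
      obtain ⟨t₀, ht₀m, ht₀⟩ := Finset.exists_mem_eq_sup' (succs_nonempty (subg G) s)
        (fun t => max 0 (iter (subg G) K₃ t - (subg G).w s t))
      have htE' : (subg G).E s t₀ := mem_succs.1 ht₀m
      have htA : ¬ Bdd G t₀ := htE'.2 hs hp
      refine ⟨t₀, htA, subg_E htE', ?_⟩
      have h1 : 1 ≤ ψ s := hK₃big s hs
      have h3 : ψ s ≤ max 0 (ψ t₀ - G.w s t₀) := by
        rw [show (ψ t₀ - G.w s t₀) = (iter (subg G) K₃ t₀ - (subg G).w s t₀) from rfl]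
        rw [← ht₀, ← h2]
        exact hψmono s
      have h4 : ψ s ≤ ψ t₀ - G.w s t₀ := by
        rcases max_cases 0 (ψ t₀ - G.w s t₀) with ⟨heq, _⟩ | ⟨heq, _⟩ <;> omega
      omega

end EGP
namespace EGP

variable {S : Type} [Fintype S]

/-- A play consistent with a positional strategy `τ` of player 1 (as a function on states). -/
def MLPlay (G : Game S) (τ : S → S) (s₀ : S) (π : ℕ → S) : Prop :=
  π 0 = s₀ ∧ ∀ n, G.E (π n) (π (n + 1)) ∧ (G.p1 (π n) → π (n + 1) = τ (π n))

/-- A play consistent with a positional strategy `τ` of player 2. -/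
def MLPlay2 (G : Game S) (τ : S → S) (s₀ : S) (π : ℕ → S) : Prop :=
  π 0 = s₀ ∧ ∀ n, G.E (π n) (π (n + 1)) ∧ (¬ G.p1 (π n) → π (n + 1) = τ (π n))

lemma ELp_zero (G : Game S) (π : ℕ → S) : ELp G π 0 = 0 := by simp [ELp]

lemma ELp_succ (G : Game S) (π : ℕ → S) (n : ℕ) :
    ELp G π (n + 1) = ELp G π n + G.w (π n) (π (n + 1)) := Finset.sum_range_succ _ _

lemma ELp_add (G : Game S) (π : ℕ → S) (a b : ℕ) :
    ELp G π (a + b) = ELp G π a + ∑ r ∈ Finset.range b, G.w (π (a + r)) (π (a + r + 1)) :=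
  Finset.sum_range_add _ _ _

/-- From a P1 certificate, a positional strategy with an invariant. -/
lemma inv1 {G : Game S} {g : S → ℤ} {D : S → Prop} (cert : CertP1 G g D) :
    ∃ τ : S → S, (∀ s, G.E s (τ s)) ∧
      ∀ s₀ π, D s₀ → MLPlay G τ s₀ π →
        ∀ n, D (π n) ∧ g (π n) ≤ g s₀ + ELp G π n := by
  classical
  have hch : ∀ s, ∃ t, G.E s t ∧ (D s → G.p1 s → D t ∧ g t ≤ g s + G.w s t) := by
    intro s
    by_cases h : D s ∧ G.p1 s
    · obtain ⟨t, htD, htE, htle⟩ := ((cert s h.1).2.1) h.2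
      exact ⟨t, htE, fun _ _ => ⟨htD, htle⟩⟩
    · exact ⟨nxt G s, nxt_spec G s, fun hD hp => absurd ⟨hD, hp⟩ h⟩
  choose τ hτE hτP using hch
  refine ⟨τ, hτE, fun s₀ π hD₀ hπ => ?_⟩
  intro n
  induction n with
  | zero => rw [hπ.1, ELp_zero]; exact ⟨hD₀, by omega⟩
  | succ n ih =>
    obtain ⟨hDn, hle⟩ := ih
    obtain ⟨hE, hcons⟩ := hπ.2 n
    rw [ELp_succ]
    by_cases hp : G.p1 (π n)
    · have hnext : π (n+1) = τ (π n) := hcons hp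
      obtain ⟨hDt, htle⟩ := hτP (π n) hDn hp
      rw [hnext]
      exact ⟨hDt, by omega⟩
    · obtain ⟨hDt, htle⟩ := ((cert (π n) hDn).2.2) hp (π (n+1)) hE
      exact ⟨hDt, by omega⟩

/-- From a P2 certificate, a positional strategy (for player 2) with an invariant. -/
lemma inv2 {G : Game S} {ψ : S → ℤ} {D : S → Prop} (cert : CertP2 G ψ D) :
    ∃ τ : S → S, (∀ s, G.E s (τ s)) ∧
      ∀ s₀ π, D s₀ → MLPlay2 G τ s₀ π →
        ∀ n, D (π n) ∧ ψ s₀ + ELp G π n ≤ ψ (π n) := by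
  classical
  have hch : ∀ s, ∃ t, G.E s t ∧ (D s → ¬ G.p1 s → D t ∧ ψ s + G.w s t ≤ ψ t) := by
    intro s
    by_cases h : D s ∧ ¬ G.p1 s
    · obtain ⟨t, htD, htE, htle⟩ := ((cert s h.1).2) h.2
      exact ⟨t, htE, fun _ _ => ⟨htD, htle⟩⟩
    · exact ⟨nxt G s, nxt_spec G s, fun hD hp => absurd ⟨hD, hp⟩ h⟩
  choose τ hτE hτP using hch
  refine ⟨τ, hτE, fun s₀ π hD₀ hπ => ?_⟩
  intro n
  induction n with
  | zero => rw [hπ.1, ELp_zero]; exact ⟨hD₀, by omega⟩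
  | succ n ih =>
    obtain ⟨hDn, hle⟩ := ih
    obtain ⟨hE, hcons⟩ := hπ.2 n
    rw [ELp_succ]
    by_cases hp : G.p1 (π n)
    · obtain ⟨hDt, htle⟩ := ((cert (π n) hDn).1) hp (π (n+1)) hE
      exact ⟨hDt, by omega⟩
    · have hnext : π (n+1) = τ (π n) := hcons hp
      obtain ⟨hDt, htle⟩ := hτP (π n) hDn hp
      rw [hnext]
      exact ⟨hDt, by omega⟩

end EGP
namespace EGP

variable {S : Type} [Fintype S]

lemma w_abs_le {G : Game S} {W : ℕ} (hW : ∀ s t, G.E s t → (G.w s t).natAbs ≤ W)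
    {s t : S} (h : G.E s t) : -(W:ℤ) ≤ G.w s t ∧ G.w s t ≤ (W:ℤ) := by
  have h1 : |G.w s t| ≤ (W:ℤ) := by
    rw [Int.abs_eq_natAbs]
    exact_mod_cast hW s t h
  exact abs_le.mp h1

lemma ELp_ge_of_edges {G : Game S} {W : ℕ} (hW : ∀ s t, G.E s t → (G.w s t).natAbs ≤ W)
    {π : ℕ → S} (hE : ∀ n, G.E (π n) (π (n+1))) (n : ℕ) :
    -((n:ℤ) * W) ≤ ELp G π n := by
  induction n with
  | zero => simp [ELp_zero]
  | succ n ih =>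
    rw [ELp_succ]
    have := (w_abs_le hW (hE n)).1
    push_cast
    push_cast at ih
    linarith

lemma stack (G : Game S) (W : ℕ) (hW : ∀ s t, G.E s t → (G.w s t).natAbs ≤ W)
    (τ : S → S) (s₀ : S) (c : ℤ)
    (H : ∀ π, MLPlay G τ s₀ π → ∀ m, -c ≤ ((Fintype.card S : ℤ) + 1) * ELp G π m + m) :
    ∀ n (π : ℕ → S), MLPlay G τ s₀ π → -(((Fintype.card S : ℤ) - 1) * W) ≤ ELp G π n := by
  classical
  set N := Fintype.card S with hN
  intro n
  induction n using Nat.strong_induction_on with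
  | _ n IH =>
  intro π hπ
  by_cases hn : n < N
  · have h1 : -((n:ℤ) * W) ≤ ELp G π n := ELp_ge_of_edges hW (fun m => (hπ.2 m).1) n
    have h2 : (n:ℤ) ≤ (N:ℤ) - 1 := by
      have : (n:ℤ) < (N:ℤ) := by exact_mod_cast hn
      omega
    have h3 : (n:ℤ) * W ≤ ((N:ℤ) - 1) * W := by
      apply mul_le_mul_of_nonneg_right h2 (by positivity)
    linarith
  · push_neg at hn
    have hcard : Fintype.card S < Fintype.card (Fin (N+1)) := by simp [hN]
    obtain ⟨a, b, hab, heqab⟩ :=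
      Fintype.exists_ne_map_eq_of_card_lt (fun i : Fin (N+1) => π i) hcard
    obtain ⟨i, j, hijlt, hpij, hjN⟩ : ∃ i j : ℕ, i < j ∧ π i = π j ∧ j ≤ N := by
      rcases lt_or_gt_of_ne hab with h | h
      · exact ⟨a, b, h, heqab, Nat.lt_succ_iff.mp b.isLt⟩
      · exact ⟨b, a, h, heqab.symm, Nat.lt_succ_iff.mp a.isLt⟩
    set d := j - i with hd
    have hd1 : 1 ≤ d := by omega
    have hij' : i + d = j := by omega
    set cyc : ℤ := ELp G π j - ELp G π i with hcyc
    by_cases hc : 0 ≤ cyc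
    · -- splice out the nonnegative cycle and use the induction hypothesis
      set π' : ℕ → S := fun m => if m < i then π m else π (m + d) with hπ'
      have hval : ∀ m, m ≤ i → π' m = π m := by
        intro m hm
        by_cases h : m < i
        · simp only [hπ', if_pos h]
        · have hmi : m = i := by omega
          subst hmi
          simp only [hπ', if_neg h, hij', ← hpij]
      have hval2 : ∀ m, i ≤ m → π' m = π (m + d) := by
        intro m hm
        simp only [hπ', if_neg (by omega : ¬ m < i)]
      have hml : MLPlay G τ s₀ π' := by
        refine ⟨by rw [hval 0 (Nat.zero_le _), hπ.1], fun m => ?_⟩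
        by_cases h : m + 1 ≤ i
        · rw [hval m (by omega), hval (m+1) h]
          exact hπ.2 m
        · push_neg at h
          have him : i ≤ m := by omega
          rw [hval2 m him, hval2 (m+1) (by omega),
            show m + 1 + d = (m + d) + 1 from by omega]
          exact hπ.2 (m + d)
      have helbase : ELp G π' i = ELp G π i := by
        unfold ELp
        apply Finset.sum_congr rfl
        intro r hr
        rw [Finset.mem_range] at hr
        rw [hval r (by omega), hval (r+1) (by omega)]
      have hel : ∀ m, i ≤ m → ELp G π' m = ELp G π (m + d) - cyc := by
        intro m hm
        induction m, hm using Nat.le_induction with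
        | base =>
          rw [helbase, hij', hcyc]
          omega
        | succ m hm ihm =>
          rw [ELp_succ, ihm, hval2 m hm, hval2 (m+1) (by omega),
            show m + 1 + d = (m + d) + 1 from by omega, ELp_succ]
          omega
      have hlt : n - d < n := by omega
      have hb := IH (n - d) hlt π' hml
      have hrel : ELp G π' (n - d) = ELp G π n - cyc := by
        rw [hel (n-d) (by omega), show n - d + d = n from by omega]
      rw [hrel] at hb
      linarith
    · -- pump the negative cycle forever: contradiction with H
      push_neg at hc
      exfalso
      set π'' : ℕ → S := fun m => if m < i then π m else π (i + (m - i) % d) with hπ''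
      have hval : ∀ m, m ≤ i → π'' m = π m := by
        intro m hm
        by_cases h : m < i
        · simp only [hπ'', if_pos h]
        · have hmi : m = i := by omega
          subst hmi
          simp only [hπ'', if_neg h, Nat.sub_self, Nat.zero_mod, Nat.add_zero]
      have hval2 : ∀ m, i ≤ m → π'' m = π (i + (m - i) % d) := by
        intro m hm
        by_cases h : m < i
        · omega
        · simp only [hπ'', if_neg h]
      have hstep : ∀ m, i ≤ m → π'' (m+1) = π (i + (m - i) % d + 1) := by
        intro m hm
        have h1 : π'' (m+1) = π (i + (m + 1 - i) % d) := hval2 (m+1) (by omega)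
        set r := (m - i) % d with hr
        have hrd : r < d := Nat.mod_lt _ (by omega)
        obtain ⟨q, hq⟩ : ∃ q, m - i = d * q + r := ⟨(m - i)/d, (Nat.div_add_mod (m-i) d).symm⟩
        have h2 : m + 1 - i = d * q + (r + 1) := by omega
        rw [h1, h2, Nat.mul_add_mod]
        by_cases h3 : r + 1 < d
        · rw [Nat.mod_eq_of_lt h3, ← Nat.add_assoc]
        · have h4 : r + 1 = d := by omega
          rw [h4, Nat.mod_self, Nat.add_zero, hpij, ← hij', ← h4, ← Nat.add_assoc]
      have hml'' : MLPlay G τ s₀ π'' := by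
        refine ⟨by rw [hval 0 (Nat.zero_le _), hπ.1], fun m => ?_⟩
        by_cases h : m + 1 ≤ i
        · rw [hval m (by omega), hval (m+1) h]
          exact hπ.2 m
        · push_neg at h
          have him : i ≤ m := by omega
          rw [hval2 m him, hstep m him]
          exact hπ.2 (i + (m - i) % d)
      have helbase : ELp G π'' i = ELp G π i := by
        unfold ELp
        apply Finset.sum_congr rfl
        intro r hr
        rw [Finset.mem_range] at hr
        rw [hval r (by omega), hval (r+1) (by omega)]
      have hcycsum : ∑ r ∈ Finset.range d, G.w (π (i+r)) (π (i+r+1)) = cyc := by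
        have h5 := ELp_add G π i d
        rw [hij'] at h5
        omega
      have hloop : ∀ k : ℕ, ELp G π'' (i + k * d) = ELp G π i + k * cyc := by
        intro k
        induction k with
        | zero => simpa using helbase
        | succ k ihk =>
          have hsplit : i + (k+1) * d = (i + k * d) + d := by ring
          rw [hsplit, ELp_add]
          have hterm : ∀ r ∈ Finset.range d,
              G.w (π'' (i + k*d + r)) (π'' (i + k*d + r + 1)) = G.w (π (i+r)) (π (i+r+1)) := by
            intro r hr
            rw [Finset.mem_range] at hr
            have hmod : (i + k*d + r - i) % d = r := by
              have hsub : i + k*d + r - i = d * k + r := by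
                rw [Nat.add_assoc, Nat.add_sub_cancel_left, Nat.mul_comm k d]
              rw [hsub, Nat.mul_add_mod, Nat.mod_eq_of_lt hr]
            have e1 : π'' (i + k*d + r) = π (i + r) := by
              rw [hval2 _ (by omega), hmod]
            have e2 : π'' (i + k*d + r + 1) = π (i + r + 1) := by
              rw [hstep _ (by omega), hmod]
            rw [e1, e2]
          rw [Finset.sum_congr rfl hterm, hcycsum, ihk]
          push_cast
          ring
      set A : ℤ := ((N:ℤ) + 1) * ELp G π i + i with hA
      set k : ℕ := (A + c).toNat + 1 with hk
      have hkge : A + c + 1 ≤ (k:ℤ) := by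
        have := Int.self_le_toNat (A + c)
        push_cast [hk]
        omega
      have hH := H π'' hml'' (i + k * d)
      rw [hloop k] at hH
      have hdN : (d:ℤ) ≤ (N:ℤ) := by exact_mod_cast le_trans (by omega : d ≤ j) hjN
      have hkey : ((N:ℤ) + 1) * cyc + d ≤ -1 := by
        have : ((N:ℤ) + 1) * cyc ≤ ((N:ℤ) + 1) * (-1) := by
          apply mul_le_mul_of_nonneg_left (by omega) (by positivity)
        linarith
      have hcast : ((i + k * d : ℕ) : ℤ) = (i:ℤ) + (k:ℤ) * (d:ℤ) := by push_cast; ring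
      rw [hcast] at hH
      have hexp : ((N:ℤ) + 1) * (ELp G π i + (k:ℤ) * cyc) + ((i:ℤ) + (k:ℤ) * d)
          = A + (k:ℤ) * (((N:ℤ) + 1) * cyc + (d:ℤ)) := by ring
      rw [hexp] at hH
      have hk0 : (0:ℤ) ≤ (k:ℤ) := by positivity
      have : (k:ℤ) * (((N:ℤ) + 1) * cyc + (d:ℤ)) ≤ (k:ℤ) * (-1) := by
        apply mul_le_mul_of_nonneg_left hkey hk0
      linarith

end EGP
namespace EGP

variable {S : Type} [Fintype S]

lemma hist_zero (π : ℕ → S) : hist π 0 = [π 0] := by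
  simp [hist, List.ofFn_succ]

lemma hist_succ (π : ℕ → S) (n : ℕ) : hist π (n+1) = hist π n ++ [π (n+1)] := by
  unfold hist
  rw [List.ofFn_succ' (fun i : Fin (n+2) => π i), List.concat_eq_append]
  rfl

lemma hist_getLastD (π : ℕ → S) (n : ℕ) (x : S) : (hist π n).getLastD x = π n := by
  cases n with
  | zero => rw [hist_zero]; rfl
  | succ n => rw [hist_succ, List.getLastD_concat]

lemma hist_ne_nil (π : ℕ → S) (n : ℕ) : hist π n ≠ [] := by
  cases n with
  | zero => rw [hist_zero]; simp
  | succ n => rw [hist_succ]; simp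

lemma getLastD_eq_getLast {l : List S} (h : l ≠ []) (d : S) : l.getLastD d = l.getLast h := by
  rw [List.getLastD_eq_getLast?, List.getLast?_eq_getLast h]
  rfl

lemma getLast?_eq_getLastD {l : List S} (h : l ≠ []) (d : S) :
    l.getLast? = some (l.getLastD d) := by
  rw [getLastD_eq_getLast h d]
  exact List.getLast?_eq_getLast h

/-- Positional strategy as a history-based strategy. -/
def posStrat (τ : S → S) (s₀ : S) : List S → S := fun ρ => τ (ρ.getLastD s₀)

lemma isStrat1_posStrat {G : Game S} {τ : S → S} (hτ : ∀ s, G.E s (τ s)) (s₀ : S) :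
    IsStrat1 G (posStrat τ s₀) := by
  intro ρ hne _ _
  rw [posStrat, getLastD_eq_getLast hne s₀]
  exact hτ _

lemma mlplay_of_consistent {G : Game S} {τ : S → S} {s₀ : S} {π : ℕ → S}
    (hp : IsPlay G s₀ π) (hc : Consistent1 G (posStrat τ s₀) π) : MLPlay G τ s₀ π := by
  refine ⟨hp.1, fun n => ⟨hp.2 n, fun h1 => ?_⟩⟩
  rw [hc n h1, posStrat, hist_getLastD]

section Build

variable (G : Game S) (σ : List S → S) (τ : S → S) (s₀ : S)

noncomputable def stepB (ρ : List S) : S :=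
  @ite _ (G.p1 (ρ.getLastD s₀)) (Classical.dec _) (σ ρ) (τ (ρ.getLastD s₀))

noncomputable def hseq : ℕ → List S
  | 0 => [s₀]
  | n+1 => hseq n ++ [stepB G σ τ s₀ (hseq n)]

noncomputable def bp (n : ℕ) : S := (hseq G σ τ s₀ n).getLastD s₀

lemma bp_zero : bp G σ τ s₀ 0 = s₀ := rfl

lemma bp_succ (n : ℕ) : bp G σ τ s₀ (n+1) = stepB G σ τ s₀ (hseq G σ τ s₀ n) := by
  rw [bp, hseq, List.getLastD_concat]

lemma hseq_eq_hist (n : ℕ) : hseq G σ τ s₀ n = hist (bp G σ τ s₀) n := by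
  induction n with
  | zero => rw [hist_zero, bp_zero]; rfl
  | succ n ih => rw [hseq, hist_succ, ih, bp_succ, ih]

lemma hseq_getLastD (n : ℕ) : (hseq G σ τ s₀ n).getLastD s₀ = bp G σ τ s₀ n := rfl

lemma build (hσ : IsStrat1 G σ) (hτ : ∀ s, G.E s (τ s)) :
    IsPlay G s₀ (bp G σ τ s₀) ∧ Consistent1 G σ (bp G σ τ s₀) ∧
      MLPlay2 G τ s₀ (bp G σ τ s₀) := by
  have hne : ∀ n, hseq G σ τ s₀ n ≠ [] := by
    intro n; rw [hseq_eq_hist]; exact hist_ne_nil _ n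
  -- chains and edges
  have hmain : ∀ n, List.Chain' G.E (hseq G σ τ s₀ n) ∧
      G.E (bp G σ τ s₀ n) (bp G σ τ s₀ (n+1)) := by
    intro n
    induction n with
    | zero =>
      constructor
      · exact List.isChain_singleton _
      · rw [bp_zero, bp_succ]
        unfold stepB
        split
        · exact hσ [s₀] (by simp) (List.isChain_singleton _) (by assumption)
        · exact hτ _
    | succ n ih =>
      have hch : List.Chain' G.E (hseq G σ τ s₀ (n+1)) := by
        rw [hseq]
        unfold List.Chain'; rw [List.isChain_append]
        refine ⟨ih.1, List.isChain_singleton _, ?_⟩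
        intro x hx y hy
        rw [getLast?_eq_getLastD (hne n) s₀] at hx
        simp only [List.head?_cons, Option.mem_def, Option.some.injEq] at hx hy
        rw [← hx, ← hy, hseq_getLastD]
        have := ih.2
        rw [bp_succ] at this
        exact this
      refine ⟨hch, ?_⟩
      rw [bp_succ G σ τ s₀ (n+1)]
      unfold stepB
      rw [hseq_getLastD]
      split
      · have := hσ (hseq G σ τ s₀ (n+1)) (hne (n+1)) hch
        rw [← getLastD_eq_getLast (hne (n+1)) s₀, hseq_getLastD] at this
        exact this (by assumption)
      · exact hτ _
  have hedges : ∀ n, G.E (bp G σ τ s₀ n) (bp G σ τ s₀ (n+1)) := fun n => (hmain n).2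
  refine ⟨⟨bp_zero G σ τ s₀, hedges⟩, ?_, ⟨bp_zero G σ τ s₀, fun n => ⟨hedges n, ?_⟩⟩⟩
  · intro n h1
    rw [bp_succ]
    unfold stepB
    rw [hseq_getLastD]
    rw [if_pos h1, hseq_eq_hist]
  · intro h1
    rw [bp_succ]
    unfold stepB
    rw [hseq_getLastD, if_neg h1]

end Build

end EGP
namespace EGP

open Filter

variable {S : Type} [Fintype S]

/-- The scaled game with weights `(N+1)·w + 1`. -/
noncomputable def hatG (G : Game S) : Game S :=
  ⟨G.p1, G.E, fun s t => ((Fintype.card S : ℤ) + 1) * G.w s t + 1, G.succ⟩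

/-- The sign-reversed game. -/
noncomputable def negG (G : Game S) : Game S :=
  ⟨G.p1, G.E, fun s t => -(G.w s t), G.succ⟩

lemma ELp_hat (G : Game S) (π : ℕ → S) (n : ℕ) :
    ELp (hatG G) π n = ((Fintype.card S : ℤ) + 1) * ELp G π n + n := by
  unfold ELp
  rw [show (hatG G).w = fun s t => ((Fintype.card S : ℤ) + 1) * G.w s t + 1 from rfl]
  rw [Finset.sum_add_distrib, ← Finset.mul_sum, Finset.sum_const, Finset.card_range]
  simp

lemma ELp_neg (G : Game S) (π : ℕ → S) (n : ℕ) :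
    ELp (negG G) π n = -(ELp G π n) := by
  unfold ELp
  rw [show (negG G).w = fun s t => -(G.w s t) from rfl, ← Finset.sum_neg_distrib]

lemma mp_le_zero {u : ℕ → ℤ} {K : ℤ} (h : ∀ n, u n ≤ K) :
    limsup (fun n : ℕ => (((u n : ℝ) / n : ℝ) : EReal)) atTop ≤ (((0:ℚ) : ℝ) : EReal) := by
  have h0 : (((0:ℚ):ℝ):EReal) = ((0:ℝ):EReal) := by norm_num
  rw [h0]
  have hle : ∀ᶠ n : ℕ in atTop,
      (((u n : ℝ) / n : ℝ) : EReal) ≤ (((K:ℝ) / n : ℝ) : EReal) := by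
    filter_upwards [eventually_ge_atTop 1] with n hn
    apply EReal.coe_le_coe_iff.2
    gcongr
    exact_mod_cast h n
  refine le_trans (limsup_le_limsup hle) (le_of_eq ?_)
  have ht : Tendsto (fun n : ℕ => (((K:ℝ)/n : ℝ) : EReal)) atTop (nhds ((0:ℝ):EReal)) := by
    rw [EReal.tendsto_coe]
    exact tendsto_const_div_atTop_nhds_zero_nat _
  exact ht.limsup_eq

lemma tp_le {u : ℕ → ℤ} {K t : ℤ} (h : ∀ n, u n ≤ K) (hK : K ≤ t) :
    limsup (fun n : ℕ => ((u n : ℝ) : EReal)) atTop ≤ (((t:ℤ) : ℝ) : EReal) := by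
  refine limsup_le_of_le (by isBoundedDefault) ?_
  filter_upwards with n
  apply EReal.coe_le_coe_iff.2
  have : (u n : ℝ) ≤ (K : ℝ) := by exact_mod_cast h n
  have h2 : (K : ℝ) ≤ (t : ℝ) := by exact_mod_cast hK
  linarith

lemma main {S : Type} [Fintype S] (G : Game S) (s₀ : S) (W : ℕ)
    (hW : ∀ s s', G.E s s' → (G.w s s').natAbs ≤ W) :
    ((∃ c₀ : ℕ, ∃ σ : List S → S, Winning1 G s₀ σ (LowerObj G c₀)) ↔
      (∃ σ : List S → S, Winning1 (negG G) s₀ σ (MeanPayOff (negG G) 0))) ∧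
    ((∃ σ : List S → S, Winning1 (negG G) s₀ σ (MeanPayOff (negG G) 0)) ↔
      (∃ σ : List S → S,
        Winning1 (negG G) s₀ σ (TotalPayOff (negG G) (2 * ((Fintype.card S : ℤ) - 1) * (W : ℤ))))) ∧
    ((∃ σ : List S → S,
        Winning1 (negG G) s₀ σ (TotalPayOff (negG G) (2 * ((Fintype.card S : ℤ) - 1) * (W : ℤ)))) ↔
      (∃ t : ℤ, ∃ σ : List S → S, Winning1 (negG G) s₀ σ (TotalPayOff (negG G) t))) := by
  classical
  haveI : Nonempty S := ⟨s₀⟩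
  have hN1 : 1 ≤ Fintype.card S := Fintype.card_pos
  set N : ℕ := Fintype.card S with hNdef
  have hwbhat : ∀ s t, (hatG G).E s t → |(hatG G).w s t| ≤ ((N:ℤ)+1) * W + 1 := by
    intro s t hE
    have h1 := w_abs_le hW (hE : G.E s t)
    rw [show (hatG G).w s t = ((N:ℤ) + 1) * G.w s t + 1 from rfl]
    rw [abs_le]
    constructor
    · nlinarith [h1.1, h1.2]
    · nlinarith [h1.1, h1.2]
  rcases dichotomy (hatG G) (((N:ℤ)+1)*W+1) hwbhat s₀ with ⟨g, cert, hb⟩ | ⟨ψ, cert, hub⟩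
  · -- Player 1 wins everything
    obtain ⟨τ, hτE, hinv⟩ := inv1 cert
    have hτE' : ∀ s, G.E s (τ s) := hτE
    have hkey : ∀ π, MLPlay G τ s₀ π → ∀ n, -(((N:ℤ) - 1) * W) ≤ ELp G π n := by
      have H : ∀ π, MLPlay G τ s₀ π → ∀ m, -(g s₀) ≤ ((N:ℤ)+1) * ELp G π m + m := by
        intro π hπ m
        have hπ' : MLPlay (hatG G) τ s₀ π := hπ
        have h2 := hinv s₀ π hb hπ' m
        have h3 := ELp_hat G π m
        have h4 : 0 ≤ g (π m) := (cert (π m) h2.1).1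
        have h5 := h2.2
        rw [h3] at h5
        rw [← hNdef] at h5
        omega
      intro π hπ n
      exact stack G W hW τ s₀ (g s₀) H n π hπ
    have hstrat : IsStrat1 G (posStrat τ s₀) := isStrat1_posStrat hτE' s₀
    have hplays : ∀ π, IsPlay G s₀ π → Consistent1 G (posStrat τ s₀) π →
        ∀ n, -(((N:ℤ)-1)*W) ≤ ELp G π n :=
      fun π h1 h2 n => hkey π (mlplay_of_consistent h1 h2) n
    have hA : ∃ c₀ : ℕ, ∃ σ : List S → S, Winning1 G s₀ σ (LowerObj G c₀) := by
      refine ⟨(N-1)*W, posStrat τ s₀, hstrat, fun π h1 h2 n => ?_⟩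
      have h3 := hplays π h1 h2 n
      have hc : (((N-1)*W : ℕ) : ℤ) = ((N:ℤ)-1)*W := by
        push_cast [hN1]
        ring
      rw [hc]
      omega
    have hB : ∃ σ : List S → S, Winning1 (negG G) s₀ σ (MeanPayOff (negG G) 0) := by
      refine ⟨posStrat τ s₀, hstrat, fun π h1 h2 => ?_⟩
      have hup : ∀ n, ELp (negG G) π n ≤ ((N:ℤ)-1)*W := by
        intro n
        rw [ELp_neg]
        have := hplays π h1 h2 n
        omega
      exact mp_le_zero hup
    have hC : ∃ σ : List S → S,
        Winning1 (negG G) s₀ σ (TotalPayOff (negG G) (2 * ((N:ℤ) - 1) * (W:ℤ))) := by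
      refine ⟨posStrat τ s₀, hstrat, fun π h1 h2 => ?_⟩
      have hup : ∀ n, ELp (negG G) π n ≤ ((N:ℤ)-1)*W := by
        intro n
        rw [ELp_neg]
        have := hplays π h1 h2 n
        omega
      apply tp_le hup
      nlinarith [mul_nonneg (by omega : (0:ℤ) ≤ (N:ℤ)-1) (by positivity : (0:ℤ) ≤ (W:ℤ))]
    have hD : ∃ t : ℤ, ∃ σ : List S → S, Winning1 (negG G) s₀ σ (TotalPayOff (negG G) t) :=
      ⟨_, hC⟩
    exact ⟨iff_of_true hA hB, iff_of_true hB hC, iff_of_true hC hD⟩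
  · -- Player 2 wins everything
    obtain ⟨τ, hτE, hinv⟩ := inv2 cert
    have hτE' : ∀ s, G.E s (τ s) := hτE
    set M : ℤ := Finset.univ.sup' Finset.univ_nonempty ψ - ψ s₀ with hM
    have hlin : ∀ σ : List S → S, IsStrat1 G σ → ∃ π, IsPlay G s₀ π ∧ Consistent1 G σ π ∧
        ∀ n, ((N:ℤ)+1) * ELp G π n + n ≤ M := by
      intro σ hσ
      obtain ⟨h1, h2, h3⟩ := build G σ τ s₀ hσ hτE'
      refine ⟨bp G σ τ s₀, h1, h2, fun n => ?_⟩
      have h3' : MLPlay2 (hatG G) τ s₀ (bp G σ τ s₀) := h3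
      have h4 := hinv s₀ (bp G σ τ s₀) hub h3'
      have h5 := (h4 n).2
      have h6 : ψ (bp G σ τ s₀ n) ≤ Finset.univ.sup' Finset.univ_nonempty ψ :=
        Finset.le_sup' ψ (Finset.mem_univ _)
      have h7 := ELp_hat G (bp G σ τ s₀) n
      rw [h7] at h5
      rw [← hNdef] at h5
      omega
    have hnA : ¬ (∃ c₀ : ℕ, ∃ σ : List S → S, Winning1 G s₀ σ (LowerObj G c₀)) := by
      rintro ⟨c₀, σ, hσ, hwin⟩
      obtain ⟨π, h1, h2, h3⟩ := hlin σ hσ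
      have h4 := hwin π h1 h2
      set n : ℕ := (M + ((N:ℤ)+1) * ((c₀:ℤ) + 1)).toNat with hn
      have h5 := h3 n
      have h6 := h4 n
      have h7 : M + ((N:ℤ)+1)*((c₀:ℤ)+1) ≤ (n:ℤ) := by
        rw [hn]; exact Int.self_le_toNat _
      have h8 : ((N:ℤ)+1) * ELp G π n ≤ ((N:ℤ)+1) * (-((c₀:ℤ)+1)) := by linarith
      have h9 : ELp G π n ≤ -((c₀:ℤ)+1) :=
        le_of_mul_le_mul_left h8 (by positivity)
      omega
    have hnD : ∀ t : ℤ, ¬ (∃ σ : List S → S, Winning1 (negG G) s₀ σ (TotalPayOff (negG G) t)) := by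
      rintro t ⟨σ, hσ, hwin⟩
      have hσ' : IsStrat1 G σ := hσ
      obtain ⟨π, h1, h2, h3⟩ := hlin σ hσ'
      have h4 := hwin π h1 h2
      have hev : ∀ᶠ n : ℕ in atTop, (((t:ℝ)+1 : ℝ) : EReal) ≤ ((ELp (negG G) π n : ℝ) : EReal) := by
        filter_upwards [eventually_ge_atTop (M + ((N:ℤ)+1)*(t+1)).toNat] with n hn
        apply EReal.coe_le_coe_iff.2
        have h5 := h3 n
        have h7 : M + ((N:ℤ)+1)*(t+1) ≤ (n:ℤ) := by
          calc M + ((N:ℤ)+1)*(t+1) ≤ ((M + ((N:ℤ)+1)*(t+1)).toNat : ℤ) := Int.self_le_toNat _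
          _ ≤ (n:ℤ) := by exact_mod_cast hn
        have h8 : ((N:ℤ)+1) * (t+1) ≤ ((N:ℤ)+1) * (-(ELp G π n)) := by linarith
        have h9 : t+1 ≤ -(ELp G π n) := le_of_mul_le_mul_left h8 (by positivity)
        rw [ELp_neg]
        push_cast
        exact_mod_cast h9
      have h5 : (((t:ℝ)+1 : ℝ) : EReal) ≤ TPsupP (negG G) π :=
        le_limsup_of_frequently_le hev.frequently
      have h6 := le_trans h5 h4
      rw [EReal.coe_le_coe_iff] at h6
      linarith
    have hnC := hnD (2 * ((N:ℤ) - 1) * (W:ℤ))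
    have hnB : ¬ (∃ σ : List S → S, Winning1 (negG G) s₀ σ (MeanPayOff (negG G) 0)) := by
      rintro ⟨σ, hσ, hwin⟩
      have hσ' : IsStrat1 G σ := hσ
      obtain ⟨π, h1, h2, h3⟩ := hlin σ hσ'
      have h4 := hwin π h1 h2
      set a : ℝ := 1/(2*((N:ℝ)+1)) with ha
      have ha0 : 0 < a := by positivity
      have hev : ∀ᶠ n : ℕ in atTop,
          (a : EReal) ≤ (((ELp (negG G) π n : ℝ)/n : ℝ) : EReal) := by
        filter_upwards [eventually_ge_atTop (max (2*M.toNat) 1)] with n hn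
        apply EReal.coe_le_coe_iff.2
        have hn1 : 1 ≤ n := le_trans (le_max_right _ _) hn
        have hn2 : 2*M.toNat ≤ n := le_trans (le_max_left _ _) hn
        have hMn : 2*M ≤ (n:ℤ) := by
          calc 2*M ≤ 2*(M.toNat:ℤ) := by nlinarith [Int.self_le_toNat M]
          _ ≤ (n:ℤ) := by exact_mod_cast hn2
        have h5 := h3 n
        -- (N+1) * EL' ≥ n - M ≥ n/2
        have h8 : (n:ℤ) - M ≤ ((N:ℤ)+1) * (-(ELp G π n)) := by linarith
        have h8r : ((n:ℝ) - (M:ℝ)) ≤ ((N:ℝ)+1) * (-((ELp G π n : ℤ) : ℝ)) := by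
          exact_mod_cast h8
        have hMr : 2*(M:ℝ) ≤ (n:ℝ) := by exact_mod_cast hMn
        have hnr : (1:ℝ) ≤ (n:ℝ) := by exact_mod_cast hn1
        have hEL : (n:ℝ) ≤ 2*((N:ℝ)+1) * (-((ELp G π n : ℤ):ℝ)) := by nlinarith
        have hnpos : (0:ℝ) < (n:ℝ) := by linarith
        rw [ELp_neg]
        push_cast
        rw [le_div_iff₀ hnpos, ha, div_mul_eq_mul_div, one_mul,
          div_le_iff₀ (by positivity : (0:ℝ) < 2*((N:ℝ)+1))]
        nlinarith
      have h5 : (a : EReal) ≤ MPsupP (negG G) π :=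
        le_limsup_of_frequently_le hev.frequently
      have h6 := le_trans h5 h4
      rw [show (((0:ℚ):ℝ):EReal) = ((0:ℝ):EReal) by norm_num] at h6
      rw [EReal.coe_le_coe_iff] at h6
      linarith
    exact ⟨iff_of_false hnA hnB, iff_of_false hnB hnC, iff_of_false hnC (by
      rintro ⟨t, σ, hw⟩
      exact hnD t ⟨σ, hw⟩)⟩

end EGP
/-- Equivalence of lower-bounded energy (in `G`) with mean-payoff and total-payoff objectives
(in the sign-reversed game `G'`), with `W` the largest absolute weight of `G`. -/
theorem energy_MP_TP_equivalences {S : Type} [Fintype S] (G : Game S) (s₀ : S) (W : ℕ)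
    (hW : ∀ s s', G.E s s' → (G.w s s').natAbs ≤ W) :
    letI G' : Game S := ⟨G.p1, G.E, fun s t => -(G.w s t), G.succ⟩
    ((∃ c₀ : ℕ, ∃ σ : List S → S, Winning1 G s₀ σ (LowerObj G c₀)) ↔
      (∃ σ : List S → S, Winning1 G' s₀ σ (MeanPayOff G' 0))) ∧
    ((∃ σ : List S → S, Winning1 G' s₀ σ (MeanPayOff G' 0)) ↔
      (∃ σ : List S → S,
        Winning1 G' s₀ σ (TotalPayOff G' (2 * ((Fintype.card S : ℤ) - 1) * (W : ℤ))))) ∧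
    ((∃ σ : List S → S,
        Winning1 G' s₀ σ (TotalPayOff G' (2 * ((Fintype.card S : ℤ) - 1) * (W : ℤ)))) ↔
      (∃ t : ℤ, ∃ σ : List S → S, Winning1 G' s₀ σ (TotalPayOff G' t))) := by
  exact EGP.main G s₀ W hW

end
end

section
/- Let a : ℕ → ℤ be a sequence with bounded absolute values (there is W ∈ ℕ with |a(k)| ≤ W for all k), and define the doubled interleaved sequence v : ℕ → ℤ by v(2k) = 2·a(k) and v(2k+1) = −2·a(k). Then the average-energy of v equals the mean-payoff of a: AEsup(v) = MPsup(a) and AEinf(v) = MPinf(a). -/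
open Filter

noncomputable section

/-- The doubled interleaved sequence: `v (2k) = 2 * a k` and `v (2k+1) = -(2 * a k)`. -/
def dblSeq (a : ℕ → ℤ) : ℕ → ℤ := fun n =>
  if n % 2 = 0 then 2 * a (n / 2) else -(2 * a (n / 2))

/-- Energy level of the doubled sequence. -/
lemma EL_dblSeq (a : ℕ → ℤ) (n : ℕ) :
    EL (dblSeq a) n = if n % 2 = 1 then 2 * a (n / 2) else 0 := by
  induction n with
  | zero => simp [EL]
  | succ n ih =>
    rw [EL, Finset.sum_range_succ, ← EL, ih]
    rcases Nat.mod_two_eq_zero_or_one n with h | h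
    · have h1 : (n + 1) % 2 = 1 := by omega
      have h2 : (n + 1) / 2 = n / 2 := by omega
      simp [dblSeq, h, h1, h2]
    · have h1 : (n + 1) % 2 = 0 := by omega
      simp [dblSeq, h, h1]

/-- Partial sums of energy levels of the doubled sequence. -/
lemma sum_EL_dblSeq (a : ℕ → ℤ) (n : ℕ) :
    ∑ i ∈ Finset.range n, EL (dblSeq a) (i + 1) = 2 * EL a ((n + 1) / 2) := by
  induction n with
  | zero => simp [EL]
  | succ n ih =>
    rw [Finset.sum_range_succ, ih, EL_dblSeq]
    rcases Nat.mod_two_eq_zero_or_one n with h | h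
    · have h1 : (n + 1) % 2 = 1 := by omega
      have h2 : (n + 1) / 2 = n / 2 := by omega
      have h3 : (n + 1 + 1) / 2 = n / 2 + 1 := by omega
      rw [h3]
      simp only [h1, if_pos, h2]
      rw [show EL a (n / 2 + 1) = EL a (n / 2) + a (n / 2) from Finset.sum_range_succ a (n / 2)]
      ring
    · have h1 : (n + 1) % 2 = 0 := by omega
      have h3 : (n + 1 + 1) / 2 = (n + 1) / 2 := by omega
      simp [h1, h3]

lemma abs_EL_le (a : ℕ → ℤ) (W : ℕ) (hW : ∀ k, |a k| ≤ (W : ℤ)) (m : ℕ) :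
    |EL a m| ≤ (m : ℤ) * W := by
  calc |EL a m| ≤ ∑ i ∈ Finset.range m, |a i| := Finset.abs_sum_le_sum_abs _ _
    _ ≤ ∑ _i ∈ Finset.range m, (W : ℤ) := Finset.sum_le_sum fun i _ => hW i
    _ = (m : ℤ) * W := by simp [mul_comm]

/-- The halving map pushes `atTop` to `atTop`. -/
lemma map_half_atTop : map (fun n : ℕ => (n + 1) / 2) atTop = atTop := by
  apply le_antisymm
  · exact (tendsto_atTop_atTop.2 fun b => ⟨2 * b, fun n hn => by omega⟩)
  · intro s hs
    rw [mem_map] at hs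
    obtain ⟨N, hN⟩ := eventually_atTop.1 hs
    refine eventually_atTop.2 ⟨N, fun m hm => ?_⟩
    have := hN (2 * m) (by omega)
    show m ∈ s
    simpa [show (2 * m + 1) / 2 = m by omega] using this

/-- Real limsup/liminf are invariant under perturbations tending to zero. -/
lemma limsup_liminf_eq_of_tendsto_sub {F G : ℕ → ℝ} {C : ℝ} (hG : ∀ n, |G n| ≤ C)
    (h : Tendsto (fun n => F n - G n) atTop (nhds 0)) :
    limsup F atTop = limsup G atTop ∧ liminf F atTop = liminf G atTop := by
  set D : ℕ → ℝ := fun n => F n - G n with hD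
  have hFGD : F = G + D := by funext n; simp [hD]
  have hDsup : limsup D atTop = 0 := h.limsup_eq
  have hDinf : liminf D atTop = 0 := h.liminf_eq
  have hDle : IsBoundedUnder (· ≤ ·) atTop D := h.isBoundedUnder_le
  have hDge : IsBoundedUnder (· ≥ ·) atTop D := h.isBoundedUnder_ge
  have hGle : IsBoundedUnder (· ≤ ·) atTop G :=
    isBoundedUnder_of ⟨C, fun n => (abs_le.1 (hG n)).2⟩
  have hGge : IsBoundedUnder (· ≥ ·) atTop G :=
    isBoundedUnder_of ⟨-C, fun n => (abs_le.1 (hG n)).1⟩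
  constructor
  · apply le_antisymm
    · calc limsup F atTop = limsup (G + D) atTop := by rw [hFGD]
        _ ≤ limsup G atTop + limsup D atTop :=
            limsup_add_le hGge hGle hDge.isCoboundedUnder_le hDle
        _ = limsup G atTop := by rw [hDsup, add_zero]
    · calc limsup G atTop = limsup G atTop + liminf D atTop := by rw [hDinf, add_zero]
        _ ≤ limsup (G + D) atTop := le_limsup_add hGle hGge.isCoboundedUnder_le hDle hDge
        _ = limsup F atTop := by rw [hFGD]
  · apply le_antisymm
    · calc liminf F atTop = liminf (D + G) atTop := by
            rw [hFGD]; congr 1; funext n; simp [add_comm]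
        _ ≤ limsup D atTop + liminf G atTop :=
            liminf_add_le hDge hDle hGge hGle.isCoboundedUnder_ge
        _ = liminf G atTop := by rw [hDsup, zero_add]
    · calc liminf G atTop = liminf G atTop + liminf D atTop := by rw [hDinf, add_zero]
        _ ≤ liminf (G + D) atTop := le_liminf_add hGge hGle hDge hDle.isCoboundedUnder_ge
        _ = liminf F atTop := by rw [hFGD]

/-- For a bounded real sequence, the `EReal` limsup/liminf is the coercion of the real one. -/
lemma limsup_liminf_coe_ereal (u : ℕ → ℝ) (C : ℝ) (hu : ∀ n, |u n| ≤ C) :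
    limsup (fun n => ((u n : ℝ) : EReal)) atTop = ((limsup u atTop : ℝ) : EReal) ∧
    liminf (fun n => ((u n : ℝ) : EReal)) atTop = ((liminf u atTop : ℝ) : EReal) := by
  have hmono : Monotone ((↑) : ℝ → EReal) := fun x y hxy => EReal.coe_le_coe_iff.2 hxy
  have hle : IsBoundedUnder (· ≤ ·) atTop u :=
    isBoundedUnder_of ⟨C, fun n => (abs_le.1 (hu n)).2⟩
  have hge : IsBoundedUnder (· ≥ ·) atTop u :=
    isBoundedUnder_of ⟨-C, fun n => (abs_le.1 (hu n)).1⟩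
  constructor
  · exact (hmono.map_limsup_of_continuousAt u
      (continuous_coe_real_ereal.continuousAt) hle hge.isCoboundedUnder_le).symm
  · exact (hmono.map_liminf_of_continuousAt u
      (continuous_coe_real_ereal.continuousAt) hle.isCoboundedUnder_ge hge).symm

/-- For a bounded integer sequence `a`, the average-energy of the doubled interleaved
sequence equals the mean-payoff of `a` (for both the limsup and liminf variants). -/
theorem AE_dbl_eq_MP (a : ℕ → ℤ) (W : ℕ) (hW : ∀ k, |a k| ≤ (W : ℤ)) :
    AEsup (dblSeq a) = MPsup a ∧ AEinf (dblSeq a) = MPinf a := by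
  set h : ℕ → ℕ := fun n => (n + 1) / 2 with hh
  set g : ℕ → ℝ := fun m => (EL a m : ℝ) / m with hg
  set F : ℕ → ℝ := fun n => (∑ i ∈ Finset.range n, (EL (dblSeq a) (i + 1) : ℝ)) / n with hFdef
  set G : ℕ → ℝ := fun n => g (h n) with hGdef
  have hELr : ∀ m : ℕ, |(EL a m : ℝ)| ≤ (m : ℝ) * W := by
    intro m
    have := abs_EL_le a W hW m
    calc |(EL a m : ℝ)| = ((|EL a m| : ℤ) : ℝ) := by push_cast; ring
      _ ≤ (((m : ℤ) * W : ℤ) : ℝ) := by exact_mod_cast this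
      _ = (m : ℝ) * W := by push_cast; ring
  have hgbd : ∀ m, |g m| ≤ W := by
    intro m
    rcases Nat.eq_zero_or_pos m with rfl | hm
    · simp [hg, EL]
    · have hm' : (0 : ℝ) < m := by exact_mod_cast hm
      rw [hg]
      simp only
      rw [abs_div, abs_of_pos hm', div_le_iff₀ hm']
      calc |(EL a m : ℝ)| ≤ (m : ℝ) * W := hELr m
        _ = (W : ℝ) * m := by ring
  have hGbd : ∀ n, |G n| ≤ W := fun n => hgbd _
  -- Explicit formula for F.
  have hFformula : ∀ n, F n = 2 * (EL a (h n) : ℝ) / n := by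
    intro n
    rw [hFdef]
    simp only
    congr 1
    have := sum_EL_dblSeq a n
    calc (∑ i ∈ Finset.range n, (EL (dblSeq a) (i + 1) : ℝ))
        = (((∑ i ∈ Finset.range n, EL (dblSeq a) (i + 1)) : ℤ) : ℝ) := by push_cast; ring
      _ = ((2 * EL a ((n + 1) / 2) : ℤ) : ℝ) := by rw [this]
      _ = 2 * (EL a (h n) : ℝ) := by push_cast; ring
  -- The difference F - G tends to zero.
  have hdiff : ∀ n, |F n - G n| ≤ (W : ℝ) / n := by
    intro n
    rcases Nat.eq_zero_or_pos n with rfl | hn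
    · have h0 : h 0 = 0 := by simp [hh]
      have : F 0 = 0 := by simp [hFdef]
      rw [this, hGdef]
      simp [h0, hg, EL]
    · have hm1 : 1 ≤ h n := by simp only [hh]; omega
      have hn' : (0 : ℝ) < n := by exact_mod_cast hn
      have hm' : (0 : ℝ) < (h n : ℝ) := by exact_mod_cast hm1
      have hE := hELr (h n)
      have hGn : G n = (EL a (h n) : ℝ) / (h n) := rfl
      rw [hFformula n, hGn]
      have hcase : 2 * h n = n ∨ 2 * h n = n + 1 := by simp only [hh]; omega
      rcases hcase with hc | hc
      · have hc' : (2 : ℝ) * (h n) = n := by exact_mod_cast hc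
        have : 2 * (EL a (h n) : ℝ) / n - (EL a (h n) : ℝ) / (h n) = 0 := by
          rw [← hc']; field_simp; ring
        rw [this, abs_zero]
        positivity
      · have hc' : (2 : ℝ) * (h n) = n + 1 := by exact_mod_cast hc
        have heq : 2 * (EL a (h n) : ℝ) / n - (EL a (h n) : ℝ) / (h n)
            = (EL a (h n) : ℝ) / (n * h n) := by
          field_simp
          linear_combination (EL a (h n) : ℝ) * hc'
        rw [heq, abs_div, abs_of_pos (by positivity : (0:ℝ) < (n : ℝ) * h n)]
        rw [div_le_div_iff₀ (by positivity) hn']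
        calc |(EL a (h n) : ℝ)| * n ≤ ((h n : ℝ) * W) * n := by
              have := hELr (h n); nlinarith [hn'.le]
          _ = (W : ℝ) * ((n : ℝ) * h n) := by ring
  have htend : Tendsto (fun n => F n - G n) atTop (nhds 0) := by
    apply squeeze_zero_norm (fun n => hdiff n)
    exact tendsto_const_div_atTop_nhds_zero_nat (W : ℝ)
  -- real limsup/liminf equalities
  have hreal := limsup_liminf_eq_of_tendsto_sub hGbd htend
  have hGg : limsup G atTop = limsup g atTop ∧ liminf G atTop = liminf g atTop := by
    have h1 : map G atTop = map g atTop := by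
      rw [hGdef, show (fun n => g (h n)) = g ∘ h from rfl, ← Filter.map_map, map_half_atTop]
    constructor
    · simp only [limsup, h1]
    · simp only [liminf, h1]
  -- F is bounded
  have hFbd : ∀ n, |F n| ≤ 2 * W := by
    intro n
    rcases Nat.eq_zero_or_pos n with rfl | hn
    · have : F 0 = 0 := by simp [hFdef]
      rw [this, abs_zero]; positivity
    · have hn' : (0 : ℝ) < n := by exact_mod_cast hn
      have hle : (h n : ℝ) ≤ n := by
        have : h n ≤ n := by simp only [hh]; omega
        exact_mod_cast this
      rw [hFformula n, abs_div, abs_of_pos hn', div_le_iff₀ hn']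
      have hE := hELr (h n)
      calc |2 * (EL a (h n) : ℝ)| = 2 * |(EL a (h n) : ℝ)| := by
            rw [abs_mul, abs_two]
        _ ≤ 2 * ((h n : ℝ) * W) := by nlinarith
        _ ≤ 2 * W * n := by nlinarith [hE, abs_nonneg (EL a (h n) : ℝ)]
  have hbridgeF := limsup_liminf_coe_ereal F (2 * W) hFbd
  have hbridgeg := limsup_liminf_coe_ereal g W hgbd
  constructor
  · show limsup (fun n => ((F n : ℝ) : EReal)) atTop = limsup (fun n => ((g n : ℝ) : EReal)) atTop
    rw [hbridgeF.1, hbridgeg.1, hreal.1, hGg.1]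
  · show liminf (fun n => ((F n : ℝ) : EReal)) atTop = liminf (fun n => ((g n : ℝ) : EReal)) atTop
    rw [hbridgeF.2, hbridgeg.2, hreal.2, hGg.2]

end
end
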